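/- arXiv:1911.09954 — 6 statements merged into one kernel-verified Lean document; each statement's English description precedes it below -/
import Mathlib

section
/- Let (X, M, μ) be a measure space equipped with a ball-basis B. If μ(X) < ∞, then X itself is a ball, i.e. X ∈ B (in fact X = B* for some ball B). -/
open MeasureTheory ENNReal Set Filter

noncomputable section

/-- A ball-basis on a measure space, with hull constant `K` (conditions B1–B4). -/
structure BallBasis (X : Type*) [MeasurableSpace X] (μ : Measure X) where
  balls : Set (Set X)
  K : ℝ≥0∞
  K_pos : 0 < K
  K_lt_top : K < ∞
  meas : ∀ B ∈ balls, MeasurableSet B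
  pos : ∀ B ∈ balls, 0 < μ B
  lt_top : ∀ B ∈ balls, μ B < ∞
  pair : ∀ x y : X, ∃ B ∈ balls, x ∈ B ∧ y ∈ B
  approx : ∀ E : Set X, MeasurableSet E → ∀ ε : ℝ≥0∞, 0 < ε →
    ∃ Bs : ℕ → Set X, (∀ k, Bs k ∈ balls) ∧ μ (symmDiff E (⋃ k, Bs k)) < ε
  hull : Set X → Set X
  hull_mem : ∀ B ∈ balls, hull B ∈ balls
  hull_sub : ∀ B ∈ balls, ∀ A ∈ balls, μ A ≤ 2 * μ B → (A ∩ B).Nonempty → A ⊆ hull B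
  hull_bound : ∀ B ∈ balls, μ (hull B) ≤ K * μ B

/-- The doubling property of a ball-basis, with doubling constant `η > 2`. -/
def BallBasis.Doubling {X : Type*} [MeasurableSpace X] {μ : Measure X}
    (𝓑 : BallBasis X μ) (η : ℝ≥0∞) : Prop :=
  2 < η ∧ ∀ A ∈ 𝓑.balls, μ A < μ (univ : Set X) / 2 →
    ∃ B ∈ 𝓑.balls, A ⊆ B ∧ 2 * μ A ≤ μ B ∧ μ B ≤ η * μ A

variable {X : Type*} [MeasurableSpace X]

/-- Oscillation `OSC_E(f) = sup_{x,x' ∈ E} |f x − f x'|` of a real function, valued in `ℝ≥0∞`. -/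
def osc (f : X → ℝ) (E : Set X) : ℝ≥0∞ :=
  ⨆ x ∈ E, ⨆ y ∈ E, ENNReal.ofReal (f x - f y)

/-- Oscillation of an `ℝ≥0∞`-valued function. -/
def eosc (F : X → ℝ≥0∞) (E : Set X) : ℝ≥0∞ :=
  ⨆ x ∈ E, ⨆ y ∈ E, (F x - F y)

/-- `OSC_{B,α}(f)`: the infimum of `OSC_E(f)` over measurable `E ⊆ B` with `μ(E) ≥ α μ(B)`. -/
def OSCa (μ : Measure X) (f : X → ℝ) (B : Set X) (α : ℝ) : ℝ≥0∞ :=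
  ⨅ (E : Set X) (_ : MeasurableSet E) (_ : E ⊆ B)
    (_ : ENNReal.ofReal α * μ B ≤ μ E), osc f E

/-- `OSC_{B,α}` for `ℝ≥0∞`-valued functions. -/
def eOSCa (μ : Measure X) (F : X → ℝ≥0∞) (B : Set X) (α : ℝ) : ℝ≥0∞ :=
  ⨅ (E : Set X) (_ : MeasurableSet E) (_ : E ⊆ B)
    (_ : ENNReal.ofReal α * μ B ≤ μ E), eosc F E

/-- `INF_{B,α}(g)`: the infimum of `‖g‖_{L^∞(E)}` over measurable `E ⊆ B` with `μ(E) ≥ α μ(B)`. -/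
def INFa (μ : Measure X) (g : X → ℝ) (B : Set X) (α : ℝ) : ℝ≥0∞ :=
  ⨅ (E : Set X) (_ : MeasurableSet E) (_ : E ⊆ B)
    (_ : ENNReal.ofReal α * μ B ≤ μ E),
      essSup (fun x => ENNReal.ofReal |g x|) (μ.restrict E)

/-- `INF_B(g) = essinf_{y ∈ B} |g y|`. -/
def eINF (μ : Measure X) (g : X → ℝ) (B : Set X) : ℝ≥0∞ :=
  essInf (fun x => ENNReal.ofReal |g x|) (μ.restrict B)

/-- A density point of a set `F` with respect to a ball-basis. -/
def IsDensityPoint (μ : Measure X) (𝓑 : BallBasis X μ) (F : Set X) (x : X) : Prop :=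
  x ∈ F ∧ ∀ γ : ℝ, 0 < γ → γ < 1 →
    ∃ B ∈ 𝓑.balls, x ∈ B ∧ ENNReal.ofReal γ * μ B < μ (B ∩ F)

/-- A median of `f` over `B`. -/
def IsMedian (μ : Measure X) (f : X → ℝ) (B : Set X) (m : ℝ) : Prop :=
  μ {x ∈ B | m < f x} ≤ μ B / 2 ∧ μ {x ∈ B | f x < m} ≤ μ B / 2

/-- A median of an `ℝ≥0∞`-valued function over `B`. -/
def IsMedianE (μ : Measure X) (F : X → ℝ≥0∞) (B : Set X) (m : ℝ≥0∞) : Prop :=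
  μ {x ∈ B | m < F x} ≤ μ B / 2 ∧ μ {x ∈ B | F x < m} ≤ μ B / 2

/-- `⟨f⟩_B = (μ(B)⁻¹ ∫_B |f|^r)^{1/r}`. -/
def avgPow (μ : Measure X) (f : X → ℝ) (B : Set X) (r : ℝ) : ℝ≥0∞ :=
  ((μ B)⁻¹ * ∫⁻ x in B, (ENNReal.ofReal |f x|) ^ r ∂μ) ^ (1 / r)

/-- `f_B = μ(B)⁻¹ ∫_B f`. -/
def intAvg (μ : Measure X) (f : X → ℝ) (B : Set X) : ℝ :=
  (∫ x in B, f x ∂μ) / (μ B).toReal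

/-- `⟨f⟩_{#,B} = (μ(B)⁻¹ ∫_B |f − f_B|^r)^{1/r}`. -/
def sharpAvg (μ : Measure X) (f : X → ℝ) (B : Set X) (r : ℝ) : ℝ≥0∞ :=
  ((μ B)⁻¹ * ∫⁻ x in B, (ENNReal.ofReal |f x - intAvg μ f B|) ^ r ∂μ) ^ (1 / r)

/-- `⟨f⟩*_B = sup_{A ∈ 𝓑, A ⊇ B} ⟨f⟩_A`. -/
def starAvg (μ : Measure X) (𝓑 : BallBasis X μ) (f : X → ℝ) (B : Set X) (r : ℝ) : ℝ≥0∞ :=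
  ⨆ (A : Set X) (_ : A ∈ 𝓑.balls) (_ : B ⊆ A), avgPow μ f A r

/-- `⟨f⟩*_{#,B} = sup_{A ∈ 𝓑, A ⊇ B} ⟨f⟩_{#,A}`. -/
def starSharp (μ : Measure X) (𝓑 : BallBasis X μ) (f : X → ℝ) (B : Set X) (r : ℝ) : ℝ≥0∞ :=
  ⨆ (A : Set X) (_ : A ∈ 𝓑.balls) (_ : B ⊆ A), sharpAvg μ f A r

/-- The maximal function `M f(x) = sup_{B ∋ x} ⟨f⟩_B`. -/
def Mmax (μ : Measure X) (𝓑 : BallBasis X μ) (f : X → ℝ) (r : ℝ) (x : X) : ℝ≥0∞ :=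
  ⨆ (B : Set X) (_ : B ∈ 𝓑.balls) (_ : x ∈ B), avgPow μ f B r

/-- The sharp maximal function `M_# f(x) = sup_{B ∋ x} ⟨f⟩_{#,B}`. -/
def Msharp (μ : Measure X) (𝓑 : BallBasis X μ) (f : X → ℝ) (r : ℝ) (x : X) : ℝ≥0∞ :=
  ⨆ (B : Set X) (_ : B ∈ 𝓑.balls) (_ : x ∈ B), sharpAvg μ f B r

/-- The local sharp maximal function of Jawerth–Torchinsky,
`M_{#,α} f(x) = sup_{B ∋ x} OSC_{B,α}(f)`. -/
def Mla (μ : Measure X) (𝓑 : BallBasis X μ) (f : X → ℝ) (α : ℝ) (x : X) : ℝ≥0∞ :=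
  ⨆ (B : Set X) (_ : B ∈ 𝓑.balls) (_ : x ∈ B), OSCa μ f B α

/-- `|a − b|` in `ℝ≥0∞`. -/
def ediff (a b : ℝ≥0∞) : ℝ≥0∞ := (a - b) ⊔ (b - a)

/-- A subadditive operator. -/
def SubadditiveOp (T : (X → ℝ) → (X → ℝ)) : Prop :=
  (∀ (c : ℝ) (f : X → ℝ) (x : X), |T (c • f) x| = |c| * |T f x|) ∧
  (∀ (f g : X → ℝ) (x : X), |T (f + g) x| ≤ |T f x| + |T g x|)

/-- The localization property of a bounded oscillation (BO) operator, with constant `L`: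
`OSC_B (T (f · 1_{X ∖ B*})) ≤ L ⟨f⟩*_B` for all `f ∈ L^r` and balls `B`. -/
def HasBOconst (μ : Measure X) (𝓑 : BallBasis X μ) (r : ℝ)
    (T : (X → ℝ) → (X → ℝ)) (L : ℝ≥0∞) : Prop :=
  ∀ f : X → ℝ, MemLp f (ENNReal.ofReal r) μ → ∀ B ∈ 𝓑.balls,
    osc (T ((𝓑.hull B)ᶜ.indicator f)) B ≤ L * starAvg μ 𝓑 f B r

/-- The weak-`L^r` inequality for `T`, with norm `N`. -/
def WeakType (μ : Measure X) (r : ℝ) (T : (X → ℝ) → (X → ℝ)) (N : ℝ≥0∞) : Prop :=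
  ∀ f : X → ℝ, MemLp f (ENNReal.ofReal r) μ → ∀ lam : ℝ, 0 < lam →
    μ {x | lam < |T f x|} ≤ (N / ENNReal.ofReal lam) ^ r *
      ∫⁻ x, (ENNReal.ofReal |f x|) ^ r ∂μ
/-- if `μ(X) < ∞`, then `X` itself is a ball; in fact `X = B*` for some ball. -/
theorem univ_mem_balls_of_finite_measure
    {X : Type*} [MeasurableSpace X] (μ : Measure X) (𝓑 : BallBasis X μ)
    (hX : μ (univ : Set X) < ∞) :
    (univ : Set X) ∈ 𝓑.balls ∧ ∃ B ∈ 𝓑.balls, 𝓑.hull B = univ := by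
  obtain ⟨Bs, hBs, -⟩ := 𝓑.approx ∅ MeasurableSet.empty 1 one_pos
  have hB₀ := hBs 0
  set s : ℝ≥0∞ := ⨆ B ∈ 𝓑.balls, μ B with hsdef
  have hs_top : s < ∞ :=
    lt_of_le_of_lt (iSup₂_le fun B _ => measure_mono (subset_univ B)) hX
  have hs_pos : 0 < s :=
    lt_of_lt_of_le (𝓑.pos _ hB₀) (le_iSup₂ (f := fun B (_ : B ∈ 𝓑.balls) => μ B) _ hB₀)
  have hhalf : s / 2 < s := ENNReal.half_lt_self hs_pos.ne' hs_top.ne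
  obtain ⟨B, hB, hBs2⟩ : ∃ B ∈ 𝓑.balls, s / 2 < μ B := by
    rw [hsdef] at hhalf
    simpa [lt_iSup_iff] using hhalf
  have hmem : ∀ y, y ∈ 𝓑.hull B := by
    intro y
    obtain ⟨x, hx⟩ : B.Nonempty := nonempty_of_measure_ne_zero (𝓑.pos B hB).ne'
    obtain ⟨A, hA, hxA, hyA⟩ := 𝓑.pair x y
    have hAle : μ A ≤ 2 * μ B := by
      calc μ A ≤ s := le_iSup₂ (f := fun B (_ : B ∈ 𝓑.balls) => μ B) A hA
        _ = 2 * (s / 2) := by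
          rw [ENNReal.mul_div_cancel' (by norm_num) (by norm_num)]
        _ ≤ 2 * μ B := by exact mul_le_mul_right hBs2.le 2
    exact 𝓑.hull_sub B hB A hA hAle ⟨x, hxA, hx⟩ hyA
  have huniv : 𝓑.hull B = univ := eq_univ_iff_forall.2 hmem
  exact ⟨huniv ▸ 𝓑.hull_mem B hB, B, hB, huniv⟩
end
end

section
/- Let B be a doubling ball-basis in a measure space (X, M, μ) with hull constant K and doubling constant η. If F ⊆ X is measurable with μ(F) < μ(X)/4, then for every density point x of F there exists a ball B ∋ x such that (2ηK)⁻¹ μ(B*) ≤ μ(B* ∩ F) ≤ μ(B*)/2 and (2η)⁻¹ μ(B) ≤ μ(B ∩ F) ≤ μ(B)/2. -/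
open MeasureTheory ENNReal Set Filter

noncomputable section

variable {X : Type*} [MeasurableSpace X]

private lemma wb_aux {c u v : ℝ≥0∞} (b : ℝ≥0∞) (hc0 : c ≠ 0) (hct : c ≠ ∞)
    (h : u ≤ c * v) : (b * c)⁻¹ * u ≤ b⁻¹ * v := by
  calc (b*c)⁻¹ * u ≤ (b*c)⁻¹ * (c * v) := by gcongr
    _ = b⁻¹ * ((c⁻¹ * c) * v) := by
        rw [ENNReal.mul_inv (Or.inr hct) (Or.inr hc0)]; ring
    _ = b⁻¹ * v := by rw [ENNReal.inv_mul_cancel hc0 hct, one_mul]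

/-- every density point of a set of measure `< μ(X)/4` admits a
well balanced ball. -/
theorem exists_well_balanced_ball
    {X : Type*} [MeasurableSpace X] (μ : Measure X) (𝓑 : BallBasis X μ)
    (η : ℝ≥0∞) (hd : 𝓑.Doubling η)
    (F : Set X) (hFmeas : MeasurableSet F) (hF : μ F < μ (univ : Set X) / 4)
    (x : X) (hx : IsDensityPoint μ 𝓑 F x) :
    ∃ B ∈ 𝓑.balls, x ∈ B ∧
      (2 * η * 𝓑.K)⁻¹ * μ (𝓑.hull B) ≤ μ (𝓑.hull B ∩ F) ∧
      μ (𝓑.hull B ∩ F) ≤ μ (𝓑.hull B) / 2 ∧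
      (2 * η)⁻¹ * μ B ≤ μ (B ∩ F) ∧
      μ (B ∩ F) ≤ μ B / 2 := by
  classical
  by_contra hcon
  push_neg at hcon
  have hFfin : μ F < ∞ := hF.trans_le le_top
  -- initial ball with density > 1/2
  obtain ⟨C₀, hC₀mem, hxC₀, hC₀den'⟩ := hx.2 (1/2) (by norm_num) (by norm_num)
  have half_eq : ENNReal.ofReal (1/2) = (2:ℝ≥0∞)⁻¹ := by
    rw [show (1/2:ℝ) = (2:ℝ)⁻¹ by norm_num, ENNReal.ofReal_inv_of_pos (by norm_num)]
    norm_num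
  have hC₀den : μ C₀ / 2 < μ (C₀ ∩ F) := by
    rwa [half_eq, ← ENNReal.div_eq_inv_mul] at hC₀den'
  -- key growth step
  have key : ∀ C ∈ 𝓑.balls, x ∈ C → μ C / 2 < μ (C ∩ F) →
      ∃ C' ∈ 𝓑.balls, x ∈ C' ∧ μ C' / 2 < μ (C' ∩ F) ∧ 2 * μ C ≤ μ C' := by
    intro C hCmem hxC hden
    have hCF_le : μ (C ∩ F) ≤ μ F := measure_mono inter_subset_right
    have hClt : μ C < 2 * μ F := by
      have h1 : μ C < 2 * μ (C ∩ F) := by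
        have := (ENNReal.mul_lt_mul_iff_right (a := 2) (by norm_num) (by norm_num)).mpr hden
        calc μ C = 2 * (μ C / 2) := by
              rw [ENNReal.mul_div_cancel' (by norm_num) (by norm_num)]
          _ < 2 * μ (C ∩ F) := this
      exact h1.trans_le (by gcongr)
    have hCsmall : μ C < μ (univ : Set X) / 2 := by
      calc μ C < 2 * μ F := hClt
        _ < 2 * (μ (univ : Set X) / 4) :=
            (ENNReal.mul_lt_mul_iff_right (by norm_num) (by norm_num)).mpr hF
        _ ≤ μ (univ : Set X) / 2 := by
            rw [ENNReal.div_eq_inv_mul, ENNReal.div_eq_inv_mul, ← mul_assoc]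
            gcongr
            rw [show (4:ℝ≥0∞) = 2 * 2 by norm_num,
              ENNReal.mul_inv (by norm_num) (by norm_num), ← mul_assoc,
              ENNReal.mul_inv_cancel (by norm_num) (by norm_num), one_mul]
    obtain ⟨D, hDmem, hCD, hDlow, hDhigh⟩ := hd.2 C hCmem hCsmall
    have hxD : x ∈ D := hCD hxC
    by_cases hDden : μ D / 2 < μ (D ∩ F)
    · exact ⟨D, hDmem, hxD, hDden, hDlow.trans le_rfl⟩
    · push_neg at hDden
      -- the ball D has density ≤ 1/2; consider its hull
      set Dh := 𝓑.hull D with hDh_def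
      have hDhmem : Dh ∈ 𝓑.balls := 𝓑.hull_mem D hDmem
      have hDsub : D ⊆ Dh := by
        have hne : D.Nonempty :=
          MeasureTheory.nonempty_of_measure_ne_zero (𝓑.pos D hDmem).ne'
        exact 𝓑.hull_sub D hDmem D hDmem
          (le_mul_of_one_le_left zero_le (by norm_num))
          (by rwa [inter_self])
      -- lower density bound for D
      have hlowD : (2 * η)⁻¹ * μ D ≤ μ (D ∩ F) := by
        rcases eq_or_ne η ∞ with hη | hη
        · simp [hη]
        · have h1 : (2 * η)⁻¹ * μ D ≤ (2:ℝ≥0∞)⁻¹ * μ C :=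
            wb_aux 2 (by rintro rfl; exact absurd hd.1 (by simp)) hη hDhigh
          calc (2 * η)⁻¹ * μ D ≤ (2:ℝ≥0∞)⁻¹ * μ C := h1
            _ = μ C / 2 := by rw [ENNReal.div_eq_inv_mul]
            _ ≤ μ (C ∩ F) := hden.le
            _ ≤ μ (D ∩ F) := measure_mono (inter_subset_inter_left _ hCD)
      by_cases hDhden : μ (Dh ∩ F) ≤ μ Dh / 2
      · -- D is a well balanced ball: contradiction with hcon
        exfalso
        have hlowDh : (2 * η * 𝓑.K)⁻¹ * μ Dh ≤ μ (Dh ∩ F) := by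
          have h1 : (2 * η * 𝓑.K)⁻¹ * μ Dh ≤ (2 * η)⁻¹ * μ D :=
            wb_aux (2 * η) 𝓑.K_pos.ne' 𝓑.K_lt_top.ne (𝓑.hull_bound D hDmem)
          calc (2 * η * 𝓑.K)⁻¹ * μ Dh ≤ (2 * η)⁻¹ * μ D := h1
            _ ≤ μ (D ∩ F) := hlowD
            _ ≤ μ (Dh ∩ F) := measure_mono (inter_subset_inter_left _ hDsub)
        exact absurd (hcon D hDmem hxD hlowDh hDhden hlowD) hDden.not_gt
      · push_neg at hDhden
        exact ⟨Dh, hDhmem, hDsub hxD, hDhden,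
          hDlow.trans (measure_mono hDsub)⟩
  -- iterate to get balls of arbitrarily large measure with density > 1/2
  have grow : ∀ n : ℕ, ∃ C ∈ 𝓑.balls, x ∈ C ∧ μ C / 2 < μ (C ∩ F) ∧
      2 ^ n * μ C₀ ≤ μ C := by
    intro n
    induction n with
    | zero => exact ⟨C₀, hC₀mem, hxC₀, hC₀den, by simp⟩
    | succ n ih =>
      obtain ⟨C, h1, h2, h3, h4⟩ := ih
      obtain ⟨C', h1', h2', h3', h4'⟩ := key C h1 h2 h3
      refine ⟨C', h1', h2', h3', ?_⟩
      calc (2:ℝ≥0∞) ^ (n+1) * μ C₀ = 2 * (2 ^ n * μ C₀) := by ring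
        _ ≤ 2 * μ C := by gcongr
        _ ≤ μ C' := h4'
  -- contradiction: balls with density > 1/2 have measure < 2 μ F
  have hC₀pos : (0:ℝ≥0∞) < μ C₀ := 𝓑.pos C₀ hC₀mem
  have hC₀fin : μ C₀ < ∞ := 𝓑.lt_top C₀ hC₀mem
  have hfin : 2 * μ F / μ C₀ ≠ ∞ :=
    (ENNReal.div_lt_top (ENNReal.mul_ne_top (by norm_num) hFfin.ne) hC₀pos.ne').ne
  obtain ⟨n, hn⟩ := ENNReal.exists_nat_gt hfin
  have hbig : 2 * μ F < 2 ^ n * μ C₀ := by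
    have h1 : 2 * μ F < (n:ℝ≥0∞) * μ C₀ :=
      (ENNReal.div_lt_iff (Or.inl hC₀pos.ne') (Or.inl hC₀fin.ne)).mp hn
    refine h1.trans_le ?_
    gcongr
    calc (n:ℝ≥0∞) ≤ ((2^n : ℕ) : ℝ≥0∞) := by exact_mod_cast (Nat.lt_two_pow_self (n := n)).le
      _ = 2 ^ n := by push_cast; ring
  obtain ⟨C, hCmem, hxC, hden, hgr⟩ := grow n
  have hClt : μ C < 2 * μ F := by
    have h1 : μ C / 2 < μ F := hden.trans_le (measure_mono inter_subset_right)
    have := (ENNReal.div_lt_iff (Or.inl (two_ne_zero)) (Or.inl (by norm_num))).mp h1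
    rwa [mul_comm] at this
  exact absurd (hbig.trans_le hgr) hClt.asymm
end
end

section
/- Let B be a doubling ball-basis in a measure space (X, M, μ) with hull constant K and doubling constant η. If F is measurable with μ(F) < μ(X)/4 and F' ⊆ F is bounded (contained in some ball), then there exists a finite or countable sequence of balls Bₖ such that: (i) F' ⊆ ⋃ₖ Bₖ up to a μ-null set and F' ∩ Bₖ ≠ ∅ for each k; (ii) Σₖ μ(Bₖ) ≤ 2ηK μ(F); (iii) μ(Bₖ ∩ F) ≤ μ(Bₖ)/2 for each k. -/
open MeasureTheory ENNReal Set Filter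

noncomputable section

variable {X : Type*} [MeasurableSpace X]

section BCLAux

variable {X : Type*} [MeasurableSpace X] {μ : Measure X}

private lemma BCL_div_mul (a : ℝ≥0∞) {b : ℝ≥0∞} (c : ℝ≥0∞) (hb : b ≠ 0) (hb' : b ≠ ∞) :
    a / (b * c) = a / b / c := by
  rw [div_eq_mul_inv, div_eq_mul_inv, div_eq_mul_inv,
    ENNReal.mul_inv (Or.inl hb) (Or.inl hb'), mul_assoc]

private lemma BCL_exists_pow (a b : ℝ≥0∞) (ha : a ≠ 0) (hb : b ≠ ∞) :
    ∃ k : ℕ, b < 2 ^ k * a := by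
  rcases eq_or_ne b 0 with rfl | hb0
  · exact ⟨0, by simpa [pos_iff_ne_zero] using ha⟩
  obtain ⟨k, hk⟩ := ENNReal.exists_inv_two_pow_lt
    (show a / b ≠ 0 by simp [ENNReal.div_eq_zero_iff, ha, hb])
  have h2k : ((2 : ℝ≥0∞) ^ k) ≠ 0 := by positivity
  have h2k' : ((2 : ℝ≥0∞) ^ k) ≠ ∞ := ENNReal.pow_ne_top ENNReal.ofNat_ne_top
  rw [← ENNReal.inv_pow] at hk
  have hmul : ((2 : ℝ≥0∞) ^ k)⁻¹ * b < a :=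
    (ENNReal.lt_div_iff_mul_lt (Or.inl hb0) (Or.inl hb)).mp hk
  refine ⟨k, ?_⟩
  calc b = 2 ^ k * (((2:ℝ≥0∞) ^ k)⁻¹ * b) := by
        rw [← mul_assoc, ENNReal.mul_inv_cancel h2k h2k', one_mul]
    _ < 2 ^ k * a := ENNReal.mul_lt_mul_right h2k h2k' hmul

private lemma BCL_subset_hull (𝓑 : BallBasis X μ) (A : Set X) (hA : A ∈ 𝓑.balls) :
    A ⊆ 𝓑.hull A :=
  𝓑.hull_sub A hA A hA (le_mul_of_one_le_left zero_le one_le_two)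
    (by simpa [Set.inter_self] using nonempty_of_measure_ne_zero (𝓑.pos A hA).ne')

private lemma BCL_maximal_disjoint {α : Type*} (S : Set (Set α)) :
    ∃ T, T ⊆ S ∧ T.PairwiseDisjoint id ∧
      ∀ B ∈ S, B.Nonempty → ∃ A ∈ T, (B ∩ A).Nonempty := by
  have hub : ∀ c ⊆ {T : Set (Set α) | T ⊆ S ∧ T.PairwiseDisjoint id},
      IsChain (· ⊆ ·) c → ∃ ub ∈ {T : Set (Set α) | T ⊆ S ∧ T.PairwiseDisjoint id},
        ∀ s ∈ c, s ⊆ ub := by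
    intro c hc hchain
    refine ⟨⋃₀ c, ⟨sUnion_subset fun t ht => (hc ht).1, fun a ha b hb hab => ?_⟩,
      fun s hs => subset_sUnion_of_mem hs⟩
    obtain ⟨t₁, ht₁, hat⟩ := ha
    obtain ⟨t₂, ht₂, hbt⟩ := hb
    rcases hchain.total ht₁ ht₂ with h12 | h21
    · exact (hc ht₂).2 (h12 hat) hbt hab
    · exact (hc ht₁).2 hat (h21 hbt) hab
  obtain ⟨T, hT⟩ := zorn_subset {T : Set (Set α) | T ⊆ S ∧ T.PairwiseDisjoint id} hub
  obtain ⟨⟨hTS, hTd⟩, hTmax⟩ := hT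
  refine ⟨T, hTS, hTd, fun B hB hBne => ?_⟩
  by_cases h : ∀ A ∈ T, Disjoint B A
  · have hins : insert B T ∈ {T : Set (Set α) | T ⊆ S ∧ T.PairwiseDisjoint id} := by
      refine ⟨insert_subset hB hTS, fun a ha b hb hab => ?_⟩
      rcases ha with rfl | ha
      · rcases hb with rfl | hb
        · exact absurd rfl hab
        · exact h b hb
      · rcases hb with rfl | hb
        · exact (h a ha).symm
        · exact hTd ha hb hab
    have hBT : B ∈ T := hTmax hins (subset_insert _ _) (mem_insert _ _)
    exact ⟨B, hBT, by simpa [Set.inter_self] using hBne⟩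
  · push_neg at h
    obtain ⟨A, hA, hnd⟩ := h
    exact ⟨A, hA, Set.not_disjoint_iff_nonempty_inter.mp hnd⟩

private lemma BCL_countable (𝓑 : BallBasis X μ) {T : Set (Set X)} (hTb : T ⊆ 𝓑.balls)
    {δ : ℝ≥0∞} (hδ : 0 < δ) (hlow : ∀ A ∈ T, δ ≤ μ A)
    (hdisj : T.PairwiseDisjoint id) {U : ℕ → Set X} (hUfin : ∀ j, μ (U j) ≠ ∞)
    (hU : ∀ A ∈ T, ∃ j, A ⊆ U j) : T.Countable := by
  have hsub : T ⊆ ⋃ j, {A ∈ T | A ⊆ U j} := fun A hA => by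
    obtain ⟨j, hj⟩ := hU A hA
    exact mem_iUnion.mpr ⟨j, hA, hj⟩
  refine Countable.mono hsub (countable_iUnion fun j => ?_)
  have hfin : Set.Finite {A : ↥{A ∈ T | A ⊆ U j} | δ ≤ μ (A : Set X)} := by
    refine Measure.finite_const_le_meas_of_disjoint_iUnion μ hδ
      (As := fun A : ↥{A ∈ T | A ⊆ U j} => (A : Set X))
      (fun A => 𝓑.meas _ (hTb A.2.1)) ?_ ?_
    · intro A B hAB
      exact hdisj A.2.1 B.2.1 (Subtype.coe_injective.ne hAB)
    · refine ne_top_of_le_ne_top (hUfin j) (measure_mono ?_)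
      exact iUnion_subset fun A => A.2.2
  have huniv : {A : ↥{A ∈ T | A ⊆ U j} | δ ≤ μ (A : Set X)} = univ :=
    eq_univ_of_forall fun A => hlow _ A.2.1
  rw [huniv, finite_univ_iff] at hfin
  exact (Set.finite_coe_iff.mp hfin).countable

private lemma BCL_vitali (𝓑 : BallBasis X μ) {𝓕 : Set (Set X)} (h𝓕 : 𝓕 ⊆ 𝓑.balls)
    {M : ℝ≥0∞} (hM : M ≠ ∞) (hbd : ∀ B ∈ 𝓕, μ B ≤ M)
    {U : ℕ → Set X} (hUfin : ∀ j, μ (U j) ≠ ∞) (hU : ∀ B ∈ 𝓕, ∃ j, B ⊆ U j) :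
    ∃ D, D ⊆ 𝓕 ∧ D.Countable ∧ D.PairwiseDisjoint id ∧
      ∀ B ∈ 𝓕, ∃ A ∈ D, (B ∩ A).Nonempty ∧ μ B ≤ 2 * μ A := by
  classical
  rcases eq_or_ne M 0 with rfl | hM0
  · refine ⟨∅, empty_subset _, countable_empty, by simp [Set.PairwiseDisjoint], fun B hB => ?_⟩
    exact absurd ((hbd B hB).antisymm zero_le) (𝓑.pos B (h𝓕 hB)).ne'
  choose maxd hmaxd1 hmaxd2 hmaxd3 using fun S : Set (Set X) => BCL_maximal_disjoint S
  set Sc : ℕ → Set (Set X) → Set (Set X) := fun n R =>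
    {B | B ∈ 𝓕 ∧ M / 2 ^ (n+1) < μ B ∧ μ B ≤ M / 2 ^ n ∧ ∀ A ∈ R, Disjoint B A} with hSc
  let acc : ℕ → Set (Set X) := fun n => Nat.rec ∅ (fun m R => R ∪ maxd (Sc m R)) n
  set T : ℕ → Set (Set X) := fun n => maxd (Sc n (acc n)) with hTdef
  have hacc_succ : ∀ n, acc (n+1) = acc n ∪ T n := fun n => rfl
  have hScsub : ∀ n R, Sc n R ⊆ 𝓕 := fun n R B hB => hB.1
  have hTsub : ∀ n, T n ⊆ Sc n (acc n) := fun n => hmaxd1 _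
  have hTlow : ∀ n, ∀ A ∈ T n, M / 2 ^ (n+1) < μ A := fun n A hA => (hTsub n hA).2.1
  have hTacc : ∀ m n, m < n → T m ⊆ acc n := by
    intro m n hmn
    induction n with
    | zero => omega
    | succ n ih =>
      rw [hacc_succ]
      rcases Nat.lt_succ_iff_lt_or_eq.mp hmn with h | h
      · exact (ih h).trans subset_union_left
      · subst h; exact subset_union_right
  have haccT : ∀ n A, A ∈ acc n → ∃ m, m < n ∧ A ∈ T m := by
    intro n
    induction n with
    | zero => intro A h; exact absurd h (notMem_empty A)
    | succ n ih =>
      intro A h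
      rw [hacc_succ] at h
      rcases h with h | h
      · obtain ⟨m, hm, hA⟩ := ih A h
        exact ⟨m, by omega, hA⟩
      · exact ⟨n, Nat.lt_succ_self n, h⟩
  have h2eq : ∀ n : ℕ, 2 * (M / 2 ^ (n+1)) = M / 2 ^ n := by
    intro n
    rw [pow_succ, BCL_div_mul M 2 (by positivity) (ENNReal.pow_ne_top ENNReal.ofNat_ne_top)]
    exact ENNReal.mul_div_cancel two_ne_zero ENNReal.ofNat_ne_top
  refine ⟨⋃ n, T n, iUnion_subset fun n => (hTsub n).trans (hScsub n _), ?_, ?_, ?_⟩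
  · refine countable_iUnion fun n => ?_
    refine BCL_countable 𝓑 ((hTsub n).trans ((hScsub n _).trans h𝓕))
      (δ := M / 2 ^ (n+1)) (ENNReal.div_pos hM0 (ENNReal.pow_ne_top ENNReal.ofNat_ne_top))
      (fun A hA => (hTlow n A hA).le) (hmaxd2 _) hUfin
      (fun A hA => hU A (hScsub n _ (hTsub n hA)))
  · intro A hA B hB hne
    obtain ⟨m, hm⟩ := mem_iUnion.mp hA
    obtain ⟨n, hn⟩ := mem_iUnion.mp hB
    rcases lt_trichotomy m n with h | h | h
    · exact ((hTsub n hn).2.2.2 A (hTacc m n h hm)).symm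
    · subst h; exact hmaxd2 _ hm hn hne
    · exact (hTsub m hm).2.2.2 B (hTacc n m h hn)
  · intro B hB
    have hpos : 0 < μ B := 𝓑.pos B (h𝓕 hB)
    have hle : μ B ≤ M := hbd B hB
    have hex : ∃ n, M / 2 ^ n < μ B := by
      obtain ⟨k, hk⟩ := BCL_exists_pow (μ B) M hpos.ne' hM
      exact ⟨k, (ENNReal.div_lt_iff (Or.inl (by positivity))
        (Or.inl (ENNReal.pow_ne_top ENNReal.ofNat_ne_top))).mpr (hk.trans_eq (mul_comm _ _))⟩
    have hn₀ : Nat.find hex ≠ 0 := by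
      intro h
      have := Nat.find_spec hex
      rw [h, pow_zero, div_one] at this
      exact absurd this (not_lt.mpr hle)
    obtain ⟨n, hfind⟩ : ∃ n, Nat.find hex = n + 1 :=
      ⟨Nat.find hex - 1, (Nat.succ_pred_eq_of_pos (Nat.pos_of_ne_zero hn₀)).symm⟩
    have hlow' : M / 2 ^ (n+1) < μ B := hfind ▸ Nat.find_spec hex
    have hupper : μ B ≤ M / 2 ^ n := not_lt.mp (Nat.find_min hex (by omega))
    rcases Classical.em (∀ A ∈ acc n, Disjoint B A) with hdall | hdall
    · have hBS : B ∈ Sc n (acc n) := ⟨hB, hlow', hupper, hdall⟩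
      obtain ⟨A, hAT, hABne⟩ := hmaxd3 (Sc n (acc n)) B hBS
        (nonempty_of_measure_ne_zero hpos.ne')
      refine ⟨A, mem_iUnion.mpr ⟨n, hAT⟩, hABne, ?_⟩
      calc μ B ≤ M / 2 ^ n := hupper
        _ = 2 * (M / 2 ^ (n+1)) := (h2eq n).symm
        _ ≤ 2 * μ A := by gcongr; exact (hTlow n A hAT).le
    · push_neg at hdall
      obtain ⟨A, hAacc, hnd⟩ := hdall
      obtain ⟨m, hmn, hAT⟩ := haccT n A hAacc
      refine ⟨A, mem_iUnion.mpr ⟨m, hAT⟩, Set.not_disjoint_iff_nonempty_inter.mp hnd, ?_⟩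
      have hmono : M / 2 ^ (n+1) ≤ M / 2 ^ (m+1) :=
        ENNReal.div_le_div_left (pow_le_pow_right₀ one_le_two (by omega)) M
      calc μ B ≤ M / 2 ^ n := hupper
        _ = 2 * (M / 2 ^ (n+1)) := (h2eq n).symm
        _ ≤ 2 * (M / 2 ^ (m+1)) := by gcongr
        _ ≤ 2 * μ A := by gcongr; exact (hTlow m A hAT).le

private lemma BCL_chain (𝓑 : BallBasis X μ) {η : ℝ≥0∞} (hd : 𝓑.Doubling η)
    {B₀ : Set X} (hB₀ : B₀ ∈ 𝓑.balls) :
    ∃ C : ℕ → Set X, (∀ j, C j ∈ 𝓑.balls) ∧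
      ∀ B ∈ 𝓑.balls, (B ∩ B₀).Nonempty → ∃ j, B ⊆ 𝓑.hull (C j) := by
  classical
  let step : {A : Set X // A ∈ 𝓑.balls} → {A : Set X // A ∈ 𝓑.balls} := fun A =>
    if h : μ A.1 < μ (univ : Set X) / 2 then
      ⟨(hd.2 A.1 A.2 h).choose, (hd.2 A.1 A.2 h).choose_spec.1⟩
    else A
  have hstep : ∀ A : {A : Set X // A ∈ 𝓑.balls},
      (A.1 ⊆ (step A).1) ∧
      (μ A.1 < μ (univ : Set X) / 2 → 2 * μ A.1 ≤ μ (step A).1) ∧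
      (¬ μ A.1 < μ (univ : Set X) / 2 → step A = A) := by
    intro A
    by_cases h : μ A.1 < μ (univ : Set X) / 2
    · have hs : step A = ⟨(hd.2 A.1 A.2 h).choose, (hd.2 A.1 A.2 h).choose_spec.1⟩ :=
        dif_pos h
      have hc := (hd.2 A.1 A.2 h).choose_spec
      rw [hs]
      exact ⟨hc.2.1, fun _ => hc.2.2.1, fun h' => absurd h h'⟩
    · have hs : step A = A := dif_neg h
      rw [hs]
      exact ⟨subset_rfl, fun h' => absurd h' h, fun _ => rfl⟩
  let C : ℕ → {A : Set X // A ∈ 𝓑.balls} := fun j => step^[j] ⟨B₀, hB₀⟩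
  have hCstep : ∀ j, C (j+1) = step (C j) := fun j => Function.iterate_succ_apply' step j _
  have hC0 : C 0 = ⟨B₀, hB₀⟩ := rfl
  have hsub : ∀ j, B₀ ⊆ (C j).1 := by
    intro j
    induction j with
    | zero => rw [hC0]
    | succ j ih => rw [hCstep]; exact ih.trans (hstep (C j)).1
  have hgrow : ∀ j, 2 ^ j * μ B₀ ≤ μ (C j).1 ∨ μ (univ : Set X) / 2 ≤ μ (C j).1 := by
    intro j
    induction j with
    | zero => left; rw [hC0, pow_zero, one_mul]
    | succ j ih =>
      rw [hCstep]
      by_cases h : μ (C j).1 < μ (univ : Set X) / 2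
      · left
        have h2 := (hstep (C j)).2.1 h
        rcases ih with ih | ih
        · calc (2:ℝ≥0∞) ^ (j+1) * μ B₀ = 2 * (2 ^ j * μ B₀) := by ring
            _ ≤ 2 * μ (C j).1 := by gcongr
            _ ≤ _ := h2
        · exact absurd ih (not_le.mpr h)
      · right
        rw [(hstep (C j)).2.2 h]
        exact not_lt.mp h
  refine ⟨fun j => (C j).1, fun j => (C j).2, fun B hB hBne => ?_⟩
  obtain ⟨k, hk⟩ := BCL_exists_pow (μ B₀) (μ B) (𝓑.pos _ hB₀).ne' (𝓑.lt_top _ hB).ne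
  have hle : μ B ≤ 2 * μ (C k).1 := by
    rcases hgrow k with h | h
    · calc μ B ≤ 2 ^ k * μ B₀ := hk.le
        _ ≤ μ (C k).1 := h
        _ ≤ 2 * μ (C k).1 := le_mul_of_one_le_left zero_le one_le_two
    · calc μ B ≤ μ (univ : Set X) := measure_mono (subset_univ B)
        _ = 2 * (μ (univ : Set X) / 2) :=
            (ENNReal.mul_div_cancel two_ne_zero ENNReal.ofNat_ne_top).symm
        _ ≤ 2 * μ (C k).1 := by gcongr
  exact ⟨k, 𝓑.hull_sub _ (C k).2 B hB hle
    (hBne.mono (Set.inter_subset_inter_right B (hsub k)))⟩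

private lemma BCL_stopping (𝓑 : BallBasis X μ) {η : ℝ≥0∞} (hd : 𝓑.Doubling η)
    {F : Set X} (hF : μ F < μ (univ : Set X) / 4)
    {A₀ : Set X} (hA₀ : A₀ ∈ 𝓑.balls) (hdens : μ A₀ / 2 < μ (A₀ ∩ F)) :
    ∃ P ∈ 𝓑.balls, A₀ ⊆ P ∧ μ P ≤ 2 * η * μ (P ∩ F) ∧
      μ (𝓑.hull P ∩ F) ≤ μ (𝓑.hull P) / 2 := by
  classical
  have hFfin : μ F ≠ ∞ := (hF.trans_le le_top).ne
  have hkey : ∀ A ∈ 𝓑.balls, ¬ μ (𝓑.hull A ∩ F) ≤ μ (𝓑.hull A) / 2 →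
      μ (𝓑.hull A) < μ (univ : Set X) / 2 ∧ μ (𝓑.hull A) < 2 * μ F := by
    intro A hA h
    push_neg at h
    have h1 : μ (𝓑.hull A) / 2 < μ F := h.trans_le (measure_mono inter_subset_right)
    have h2 : μ (𝓑.hull A) < 2 * μ F := by
      rw [ENNReal.div_lt_iff (Or.inl two_ne_zero) (Or.inl ENNReal.ofNat_ne_top)] at h1
      exact h1.trans_eq (mul_comm _ _)
    refine ⟨?_, h2⟩
    rcases eq_or_ne (μ (univ : Set X)) ∞ with hu | hu
    · rw [hu, ENNReal.top_div_of_ne_top ENNReal.ofNat_ne_top]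
      exact (𝓑.lt_top _ (𝓑.hull_mem _ hA))
    · refine h2.trans ?_
      have hlt : 2 * μ F < 2 * (μ (univ : Set X) / 4) :=
        (ENNReal.mul_lt_mul_iff_right two_ne_zero ENNReal.ofNat_ne_top).mpr hF
      have he : 2 * (μ (univ : Set X) / 4) = μ (univ : Set X) / 2 := by
        have h42 : (4 : ℝ≥0∞) = 2 * 2 := by norm_num
        rw [h42, BCL_div_mul _ 2 two_ne_zero ENNReal.ofNat_ne_top,
          ENNReal.mul_div_cancel two_ne_zero ENNReal.ofNat_ne_top]
      exact he ▸ hlt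
  let step : {A : Set X // A ∈ 𝓑.balls} → {A : Set X // A ∈ 𝓑.balls} := fun A =>
    if h : μ (𝓑.hull A.1 ∩ F) ≤ μ (𝓑.hull A.1) / 2 then A
    else ⟨(hd.2 _ (𝓑.hull_mem _ A.2) (hkey _ A.2 h).1).choose,
          (hd.2 _ (𝓑.hull_mem _ A.2) (hkey _ A.2 h).1).choose_spec.1⟩
  have hstep : ∀ A : {A : Set X // A ∈ 𝓑.balls},
      (μ (𝓑.hull A.1 ∩ F) ≤ μ (𝓑.hull A.1) / 2 → step A = A) ∧
      (¬ μ (𝓑.hull A.1 ∩ F) ≤ μ (𝓑.hull A.1) / 2 →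
        𝓑.hull A.1 ⊆ (step A).1 ∧ 2 * μ (𝓑.hull A.1) ≤ μ (step A).1 ∧
          μ (step A).1 ≤ η * μ (𝓑.hull A.1)) := by
    intro A
    by_cases h : μ (𝓑.hull A.1 ∩ F) ≤ μ (𝓑.hull A.1) / 2
    · exact ⟨fun _ => dif_pos h, fun h' => absurd h h'⟩
    · refine ⟨fun h' => absurd h' h, fun _ => ?_⟩
      have hs : step A = ⟨(hd.2 _ (𝓑.hull_mem _ A.2) (hkey _ A.2 h).1).choose,
          (hd.2 _ (𝓑.hull_mem _ A.2) (hkey _ A.2 h).1).choose_spec.1⟩ := dif_neg h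
      have hc := (hd.2 _ (𝓑.hull_mem _ A.2) (hkey _ A.2 h).1).choose_spec
      rw [hs]
      exact ⟨hc.2.1, hc.2.2.1, hc.2.2.2⟩
  let seq : ℕ → {A : Set X // A ∈ 𝓑.balls} := fun n => step^[n] ⟨A₀, hA₀⟩
  have hseq : ∀ n, seq (n+1) = step (seq n) := fun n => Function.iterate_succ_apply' step n _
  have hseq0 : seq 0 = ⟨A₀, hA₀⟩ := rfl
  have hstep_sub : ∀ A, A.1 ⊆ (step A).1 := by
    intro A
    by_cases h : μ (𝓑.hull A.1 ∩ F) ≤ μ (𝓑.hull A.1) / 2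
    · rw [(hstep A).1 h]
    · exact (BCL_subset_hull 𝓑 _ A.2).trans ((hstep A).2 h).1
  have hmono : ∀ n, A₀ ⊆ (seq n).1 := by
    intro n
    induction n with
    | zero => rw [hseq0]
    | succ n ih => rw [hseq]; exact ih.trans (hstep_sub _)
  have hstop : ∃ n, μ (𝓑.hull (seq n).1 ∩ F) ≤ μ (𝓑.hull (seq n).1) / 2 := by
    by_contra hc
    push_neg at hc
    have hgrow : ∀ n, 2 ^ n * μ A₀ ≤ μ (seq n).1 := by
      intro n
      induction n with
      | zero => rw [hseq0, pow_zero, one_mul]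
      | succ n ih =>
        have hns : ¬ μ (𝓑.hull (seq n).1 ∩ F) ≤ μ (𝓑.hull (seq n).1) / 2 :=
          not_le.mpr (hc n)
        have h2 := ((hstep (seq n)).2 hns).2.1
        rw [hseq]
        calc (2:ℝ≥0∞) ^ (n+1) * μ A₀ = 2 * (2 ^ n * μ A₀) := by ring
          _ ≤ 2 * μ (seq n).1 := by gcongr
          _ ≤ 2 * μ (𝓑.hull (seq n).1) :=
              mul_le_mul_right (measure_mono (BCL_subset_hull 𝓑 _ (seq n).2)) 2
          _ ≤ _ := h2
    have hbound : ∀ n, μ (seq n).1 < 2 * μ F := fun n =>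
      lt_of_le_of_lt (measure_mono (BCL_subset_hull 𝓑 _ (seq n).2))
        (hkey _ (seq n).2 (not_le.mpr (hc n))).2
    obtain ⟨k, hk⟩ := BCL_exists_pow (μ A₀) (2 * μ F) (𝓑.pos _ hA₀).ne'
      (ENNReal.mul_ne_top ENNReal.ofNat_ne_top hFfin)
    exact absurd (hgrow k) (not_le.mpr ((hbound k).trans hk))
  have hη1 : (1 : ℝ≥0∞) ≤ η := one_le_two.trans hd.1.le
  set N := Nat.find hstop with hN
  have hstopN : μ (𝓑.hull (seq N).1 ∩ F) ≤ μ (𝓑.hull (seq N).1) / 2 := Nat.find_spec hstop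
  refine ⟨(seq N).1, (seq N).2, hmono N, ?_, hstopN⟩
  rcases Nat.eq_zero_or_eq_succ_pred N with h0 | hsucc
  · rw [h0, hseq0]
    have h1 : μ A₀ ≤ 2 * μ (A₀ ∩ F) := by
      rw [ENNReal.div_lt_iff (Or.inl two_ne_zero) (Or.inl ENNReal.ofNat_ne_top)] at hdens
      exact (hdens.trans_eq (mul_comm _ _)).le
    calc μ A₀ ≤ 2 * μ (A₀ ∩ F) := h1
      _ = 2 * 1 * μ (A₀ ∩ F) := by ring
      _ ≤ 2 * η * μ (A₀ ∩ F) := by gcongr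
  · set n := N - 1 with hn
    have hNn : N = n + 1 := hsucc
    have hns : ¬ μ (𝓑.hull (seq n).1 ∩ F) ≤ μ (𝓑.hull (seq n).1) / 2 :=
      Nat.find_min hstop (by omega)
    have hc := (hstep (seq n)).2 hns
    have hseqN : seq N = step (seq n) := by rw [hNn, hseq]
    push_neg at hns
    have hWle : μ (𝓑.hull (seq n).1) ≤ 2 * μ (𝓑.hull (seq n).1 ∩ F) := by
      rw [ENNReal.div_lt_iff (Or.inl two_ne_zero) (Or.inl ENNReal.ofNat_ne_top)] at hns
      exact (hns.trans_eq (mul_comm _ _)).le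
    calc μ (seq N).1 ≤ η * μ (𝓑.hull (seq n).1) := by rw [hseqN]; exact hc.2.2
      _ ≤ η * (2 * μ (𝓑.hull (seq n).1 ∩ F)) := by gcongr
      _ = 2 * η * μ (𝓑.hull (seq n).1 ∩ F) := by ring
      _ ≤ 2 * η * μ ((seq N).1 ∩ F) := by
          have hsubN : 𝓑.hull (seq n).1 ⊆ (seq N).1 := by rw [hseqN]; exact hc.1
          exact mul_le_mul_right (measure_mono (inter_subset_inter hsubN subset_rfl)) _

private lemma BCL_density (𝓑 : BallBasis X μ) {F N : Set X} (hFmeas : MeasurableSet F)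
    (hNF : N ⊆ F) (hNfin : μ N ≠ ∞)
    (hN : ∀ x ∈ N, ∀ A ∈ 𝓑.balls, x ∈ A → μ (A ∩ F) ≤ μ A / 2) : μ N = 0 := by
  have key : ∀ ε : ℝ≥0∞, 0 < ε → ε ≠ ∞ → μ N ≤ (1 + 2 * 𝓑.K) * ε := by
    intro ε hε hεtop
    obtain ⟨Bs, hBs, happ⟩ := 𝓑.approx F hFmeas ε hε
    set U := ⋃ k, Bs k with hUdef
    have hsymm : F \ U ⊆ symmDiff F U := fun x hx => Or.inl hx
    have hsymm' : U \ F ⊆ symmDiff F U := fun x hx => Or.inr hx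
    have hUF : μ (U \ F) < ε := lt_of_le_of_lt (measure_mono hsymm') happ
    have hFU : μ (F \ U) < ε := lt_of_le_of_lt (measure_mono hsymm) happ
    set S : Set (Set X) := {B | (∃ k, B = Bs k) ∧ (B ∩ N).Nonempty} with hSdef
    have hSb : S ⊆ 𝓑.balls := by
      rintro B ⟨⟨k, rfl⟩, -⟩
      exact hBs k
    have hSU : ∀ B ∈ S, B ⊆ U := by
      rintro B ⟨⟨k, rfl⟩, -⟩
      exact subset_iUnion Bs k
    have hSkey : ∀ B ∈ S, μ B ≤ 2 * μ (B \ F) := by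
      intro B hB
      obtain ⟨hBk, x, hxB, hxN⟩ := hB
      have hdens := hN x hxN B (hSb ⟨hBk, x, hxB, hxN⟩) hxB
      have hfin : μ B ≠ ∞ := (𝓑.lt_top _ (hSb ⟨hBk, x, hxB, hxN⟩)).ne
      have h1 : μ B ≤ μ B / 2 + μ (B \ F) := by
        conv_lhs => rw [← measure_inter_add_diff B hFmeas]
        gcongr
      have h2 : μ B / 2 ≤ μ (B \ F) := by
        rw [← ENNReal.sub_half hfin]
        exact tsub_le_iff_left.mpr h1
      calc μ B = 2 * (μ B / 2) := (ENNReal.mul_div_cancel two_ne_zero ENNReal.ofNat_ne_top).symm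
        _ ≤ 2 * μ (B \ F) := by gcongr
    have hSbd : ∀ B ∈ S, μ B ≤ 2 * ε := by
      intro B hB
      refine (hSkey B hB).trans ?_
      gcongr
      exact (measure_mono (diff_subset_diff_left (hSU B hB))).trans hUF.le
    obtain ⟨D, hDS, hDc, hDd, hDv⟩ := BCL_vitali 𝓑 hSb (M := 2 * ε)
      (ENNReal.mul_ne_top ENNReal.ofNat_ne_top hεtop) hSbd (U := Bs)
      (fun j => (𝓑.lt_top _ (hBs j)).ne)
      (by rintro B ⟨⟨k, rfl⟩, -⟩; exact ⟨k, subset_rfl⟩)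
    have hcover : N ⊆ (F \ U) ∪ ⋃ A ∈ D, 𝓑.hull A := by
      intro x hx
      by_cases hxU : x ∈ U
      · right
        obtain ⟨k, hk⟩ := mem_iUnion.mp hxU
        have hBsS : Bs k ∈ S := ⟨⟨k, rfl⟩, x, hk, hx⟩
        obtain ⟨A, hAD, hne, hle⟩ := hDv _ hBsS
        have hsubh : Bs k ⊆ 𝓑.hull A := 𝓑.hull_sub A (hSb (hDS hAD)) _ (hBs k) hle hne
        exact mem_biUnion hAD (hsubh hk)
      · left; exact ⟨hNF hx, hxU⟩
    have hdisj2 : D.PairwiseDisjoint (fun A => A \ F) := fun A hA B hB hne =>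
      (hDd hA hB hne).mono diff_subset diff_subset
    calc μ N ≤ μ ((F \ U) ∪ ⋃ A ∈ D, 𝓑.hull A) := measure_mono hcover
      _ ≤ μ (F \ U) + μ (⋃ A ∈ D, 𝓑.hull A) := measure_union_le _ _
      _ ≤ ε + ∑' A : ↥D, μ (𝓑.hull A) :=
          add_le_add hFU.le (measure_biUnion_le μ hDc _)
      _ ≤ ε + ∑' A : ↥D, 2 * 𝓑.K * μ ((A : Set X) \ F) := by
          refine add_le_add_right (ENNReal.tsum_le_tsum fun A => ?_) ε
          calc μ (𝓑.hull (A : Set X)) ≤ 𝓑.K * μ (A : Set X) :=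
              𝓑.hull_bound _ (hSb (hDS A.2))
            _ ≤ 𝓑.K * (2 * μ ((A : Set X) \ F)) := by gcongr; exact hSkey _ (hDS A.2)
            _ = 2 * 𝓑.K * μ ((A : Set X) \ F) := by ring
      _ = ε + 2 * 𝓑.K * ∑' A : ↥D, μ ((A : Set X) \ F) := by rw [ENNReal.tsum_mul_left]
      _ ≤ ε + 2 * 𝓑.K * μ (U \ F) := by
          refine add_le_add_right (mul_le_mul_right ?_ _) ε
          rw [← measure_biUnion hDc hdisj2
            (fun A hA => (𝓑.meas _ (hSb (hDS hA))).diff hFmeas)]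
          exact measure_mono (iUnion₂_subset fun A hA => diff_subset_diff_left (hSU A (hDS hA)))
      _ ≤ ε + 2 * 𝓑.K * ε :=
          add_le_add_right (mul_le_mul_right hUF.le _) ε
      _ = (1 + 2 * 𝓑.K) * ε := by ring
  by_contra hne
  set c := 1 + 2 * 𝓑.K with hc
  have h1c : (1 : ℝ≥0∞) ≤ c := by rw [hc]; exact le_self_add
  have hc0 : c ≠ 0 := (one_pos.trans_le h1c).ne'
  have hcT : c ≠ ∞ := by
    rw [hc]
    exact ENNReal.add_ne_top.mpr ⟨ENNReal.one_ne_top,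
      ENNReal.mul_ne_top ENNReal.ofNat_ne_top 𝓑.K_lt_top.ne⟩
  have h2c0 : (2 : ℝ≥0∞) * c ≠ 0 := mul_ne_zero two_ne_zero hc0
  have h2cT : (2 : ℝ≥0∞) * c ≠ ∞ := ENNReal.mul_ne_top ENNReal.ofNat_ne_top hcT
  set ε := μ N / (2 * c) with hεdef
  have hε : 0 < ε := ENNReal.div_pos hne h2cT
  have hεtop : ε ≠ ∞ := (ENNReal.div_lt_top hNfin h2c0).ne
  have hkey := key ε hε hεtop
  have hcalc : c * ε = μ N / 2 := by
    rw [hεdef, BCL_div_mul (μ N) c two_ne_zero ENNReal.ofNat_ne_top,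
      ENNReal.mul_div_cancel hc0 hcT]
  rw [hc] at hcalc
  rw [hcalc] at hkey
  exact absurd hkey (not_le.mpr (ENNReal.half_lt_self hne hNfin))

end BCLAux

/-- balanced covering lemma. -/
theorem balanced_covering_lemma
    {X : Type*} [MeasurableSpace X] (μ : Measure X) (𝓑 : BallBasis X μ)
    (η : ℝ≥0∞) (hd : 𝓑.Doubling η)
    (F F' : Set X) (hFmeas : MeasurableSet F) (hF'meas : MeasurableSet F')
    (hF : μ F < μ (univ : Set X) / 4) (hsub : F' ⊆ F)
    (hbdd : ∃ B ∈ 𝓑.balls, F' ⊆ B) :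
    ∃ s : Set (Set X), s.Countable ∧ s ⊆ 𝓑.balls ∧
      μ (F' \ ⋃₀ s) = 0 ∧
      (∀ B ∈ s, (F' ∩ B).Nonempty) ∧
      (∑' B : s, μ (B : Set X)) ≤ 2 * η * 𝓑.K * μ F ∧
      (∀ B ∈ s, μ (B ∩ F) ≤ μ B / 2) := by
  classical
  rcases eq_or_ne (μ F) 0 with hF0 | hF0
  · refine ⟨∅, countable_empty, empty_subset _, ?_, by simp, by simp, by simp⟩
    rw [sUnion_empty, diff_empty]
    exact measure_mono_null hsub hF0
  obtain ⟨B₀, hB₀, hFB₀⟩ := hbdd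
  have hFfin : μ F ≠ ∞ := (hF.trans_le le_top).ne
  obtain ⟨C, hCb, hCcov⟩ := BCL_chain 𝓑 hd hB₀
  set Pfam : Set (Set X) := {B | B ∈ 𝓑.balls ∧ (F' ∩ B).Nonempty ∧ μ B ≤ 2 * η * μ (B ∩ F) ∧
    μ (𝓑.hull B ∩ F) ≤ μ (𝓑.hull B) / 2} with hPfam
  have hPfamb : Pfam ⊆ 𝓑.balls := fun B hB => hB.1
  have hgood : ∀ x ∈ F', ∀ A ∈ 𝓑.balls, x ∈ A → μ A / 2 < μ (A ∩ F) → ∃ P ∈ Pfam, x ∈ P := by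
    intro x hx A hA hxA hdens
    obtain ⟨P, hP, hAP, h1, h2⟩ := BCL_stopping 𝓑 hd hF hA hdens
    exact ⟨P, ⟨hP, ⟨x, hx, hAP hxA⟩, h1, h2⟩, hAP hxA⟩
  have hPfamU : ∀ B ∈ Pfam, ∃ j, B ⊆ 𝓑.hull (C j) := by
    intro B hB
    obtain ⟨x, hx1, hx2⟩ := hB.2.1
    exact hCcov B hB.1 ⟨x, hx2, hFB₀ hx1⟩
  have hUfin : ∀ j, μ (𝓑.hull (C j)) ≠ ∞ := fun j =>
    (𝓑.lt_top _ (𝓑.hull_mem _ (hCb j))).ne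
  obtain ⟨D, hDPfam, hDc, hDcov, hDsum⟩ :
      ∃ D, D ⊆ Pfam ∧ D.Countable ∧ (∀ B ∈ Pfam, ∃ A ∈ D, B ⊆ 𝓑.hull A) ∧
        (∑' B : ↥(𝓑.hull '' D), μ (B : Set X)) ≤ 2 * η * 𝓑.K * μ F := by
    rcases eq_or_ne η ∞ with rfl | hηfin
    · have hv : ∀ j : ℕ, ∃ D, D ⊆ {B ∈ Pfam | B ⊆ 𝓑.hull (C j)} ∧ D.Countable ∧
          D.PairwiseDisjoint id ∧ ∀ B ∈ {B ∈ Pfam | B ⊆ 𝓑.hull (C j)},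
            ∃ A ∈ D, (B ∩ A).Nonempty ∧ μ B ≤ 2 * μ A := by
        intro j
        exact BCL_vitali 𝓑 (fun B hB => hPfamb hB.1) (M := μ (𝓑.hull (C j))) (hUfin j)
          (fun B hB => measure_mono hB.2) (U := fun _ => 𝓑.hull (C j))
          (fun _ => hUfin j) (fun B hB => ⟨0, hB.2⟩)
      choose Dj hDj1 hDj2 _hDj3 hDj4 using hv
      refine ⟨⋃ j, Dj j, iUnion_subset fun j => (hDj1 j).trans (fun B hB => hB.1),
        countable_iUnion hDj2, ?_, ?_⟩
      · intro B hB
        obtain ⟨j, hj⟩ := hPfamU B hB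
        obtain ⟨A, hAD, hne, hle⟩ := hDj4 j B ⟨hB, hj⟩
        have hAball : A ∈ 𝓑.balls := hPfamb ((hDj1 j hAD).1)
        exact ⟨A, mem_iUnion.mpr ⟨j, hAD⟩, 𝓑.hull_sub A hAball B hB.1 hle hne⟩
      · have htop : 2 * (∞ : ℝ≥0∞) * 𝓑.K * μ F = ∞ := by
          rw [ENNReal.mul_top two_ne_zero, ENNReal.top_mul 𝓑.K_pos.ne',
            ENNReal.top_mul hF0]
        rw [htop]
        exact le_top
    · have hMfin : 2 * η * μ F ≠ ∞ :=
        ENNReal.mul_ne_top (ENNReal.mul_ne_top ENNReal.ofNat_ne_top hηfin) hFfin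
      obtain ⟨D, hDS, hDc, hDd, hDv⟩ := BCL_vitali 𝓑 hPfamb (M := 2 * η * μ F) hMfin
        (fun B hB => hB.2.2.1.trans
          (mul_le_mul_right (measure_mono inter_subset_right) _))
        (U := fun j => 𝓑.hull (C j)) hUfin hPfamU
      refine ⟨D, hDS, hDc, ?_, ?_⟩
      · intro B hB
        obtain ⟨A, hAD, hne, hle⟩ := hDv B hB
        exact ⟨A, hAD, 𝓑.hull_sub A (hPfamb (hDS hAD)) B hB.1 hle hne⟩
      · have hsurj : Function.Surjective
            (fun A : ↥D => (⟨𝓑.hull A, mem_image_of_mem _ A.2⟩ : ↥(𝓑.hull '' D))) := by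
          rintro ⟨B, A, hA, rfl⟩
          exact ⟨⟨A, hA⟩, rfl⟩
        calc (∑' B : ↥(𝓑.hull '' D), μ (B : Set X))
            ≤ ∑' A : ↥D, μ (𝓑.hull (A : Set X)) :=
              ENNReal.tsum_le_tsum_comp_of_surjective hsurj _
          _ ≤ ∑' A : ↥D, 2 * η * 𝓑.K * μ ((A : Set X) ∩ F) := by
              refine ENNReal.tsum_le_tsum fun A => ?_
              calc μ (𝓑.hull (A : Set X)) ≤ 𝓑.K * μ (A : Set X) :=
                  𝓑.hull_bound _ (hPfamb (hDS A.2))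
                _ ≤ 𝓑.K * (2 * η * μ ((A : Set X) ∩ F)) :=
                    mul_le_mul_right (hDS A.2).2.2.1 _
                _ = 2 * η * 𝓑.K * μ ((A : Set X) ∩ F) := by ring
          _ = 2 * η * 𝓑.K * ∑' A : ↥D, μ ((A : Set X) ∩ F) := ENNReal.tsum_mul_left
          _ ≤ 2 * η * 𝓑.K * μ F := by
              refine mul_le_mul_right ?_ _
              have hdisj2 : D.PairwiseDisjoint (fun A => A ∩ F) := fun A hA B hB hne =>
                (hDd hA hB hne).mono inter_subset_left inter_subset_left
              rw [← measure_biUnion hDc hdisj2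
                (fun A hA => (𝓑.meas _ (hPfamb (hDS hA))).inter hFmeas)]
              exact measure_mono (iUnion₂_subset fun A hA => inter_subset_right)
  refine ⟨𝓑.hull '' D, hDc.image _, ?_, ?_, ?_, hDsum, ?_⟩
  · rintro B ⟨A, hA, rfl⟩
    exact 𝓑.hull_mem _ (hPfamb (hDPfam hA))
  · have hsmeas : MeasurableSet (⋃₀ (𝓑.hull '' D)) := by
      refine MeasurableSet.sUnion (hDc.image _) (fun B hB => ?_)
      obtain ⟨A, hA, rfl⟩ := hB
      exact 𝓑.meas _ (𝓑.hull_mem _ (hPfamb (hDPfam hA)))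
    refine BCL_density 𝓑 hFmeas (diff_subset.trans hsub)
      (ne_top_of_le_ne_top hFfin (measure_mono (diff_subset.trans hsub))) ?_
    intro x hx A hA hxA
    by_contra hcon
    push_neg at hcon
    obtain ⟨P, hPPfam, hxP⟩ := hgood x hx.1 A hA hxA hcon
    obtain ⟨A', hA'D, hPA'⟩ := hDcov P hPPfam
    exact hx.2 ⟨𝓑.hull A', mem_image_of_mem _ hA'D, hPA' hxP⟩
  · rintro B ⟨A, hA, rfl⟩
    have hPfamA := hDPfam hA
    obtain ⟨x, hx1, hx2⟩ := hPfamA.2.1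
    exact ⟨x, hx1, BCL_subset_hull 𝓑 _ (hPfamb hPfamA) hx2⟩
  · rintro B ⟨A, hA, rfl⟩
    exact (hDPfam hA).2.2.2
end
end

section
/- Let B be a ball-basis in a measure space (X, M, μ) and 1 ≤ r < ∞. For any ball B ∈ B and f ∈ L^r(X), ⟨f⟩*_{#,B} ≤ essinf_{y∈B} M_# f(y) ≤ C ⟨f⟩*_{#,B}, where C depends only on the hull constant K. -/
open MeasureTheory ENNReal Set Filter

noncomputable section

variable {X : Type*} [MeasurableSpace X]

section AuxSharp

variable {μ : Measure X}

lemma essInf_le_of_meas_pos {ν : Measure X} {F : X → ℝ≥0∞} {c : ℝ≥0∞}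
    (h : ν {y | F y ≤ c} ≠ 0) : essInf F ν ≤ c := by
  by_contra hlt
  push_neg at hlt
  have hae : ∀ᵐ y ∂ν, essInf F ν ≤ F y := ae_essInf_le
  have h0 : ν {y | ¬ essInf F ν ≤ F y} = 0 := ae_iff.mp hae
  refine h (measure_mono_null ?_ h0)
  intro y hy hle
  exact (not_lt.2 (le_trans hle hy)) hlt

lemma memLp_integrableOn {f : X → ℝ} {r : ℝ} (hr : 1 ≤ r)
    (hf : MemLp f (ENNReal.ofReal r) μ) {b : Set X} (hfin : μ b ≠ ∞) :
    Integrable f (μ.restrict b) := by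
  haveI : IsFiniteMeasure (μ.restrict b) :=
    ⟨by rwa [Measure.restrict_apply_univ, lt_top_iff_ne_top]⟩
  exact (hf.restrict b).integrable (ENNReal.one_le_ofReal.2 hr)

lemma avg_rpow_le {f : X → ℝ} {b : Set X} (h0 : μ b ≠ 0) (hfin : μ b ≠ ∞)
    {r : ℝ} (hr : 1 ≤ r) (hf : Integrable f (μ.restrict b)) (c : ℝ) :
    ENNReal.ofReal |intAvg μ f b - c| ^ r
      ≤ (μ b)⁻¹ * ∫⁻ x in b, ENNReal.ofReal |f x - c| ^ r ∂μ := by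
  have hr0 : (0:ℝ) < r := lt_of_lt_of_le one_pos hr
  haveI : IsFiniteMeasure (μ.restrict b) :=
    ⟨by rwa [Measure.restrict_apply_univ, lt_top_iff_ne_top]⟩
  set u : X → ℝ≥0∞ := fun x => ENNReal.ofReal |f x - c| with hu_def
  have hgint : Integrable (fun x => f x - c) (μ.restrict b) := hf.sub (integrable_const c)
  have hu : AEMeasurable u (μ.restrict b) :=
    ENNReal.measurable_ofReal.comp_aemeasurable hgint.abs.aemeasurable
  have hTpos : 0 < (μ b).toReal := ENNReal.toReal_pos h0 hfin
  have havg : intAvg μ f b - c = (∫ x in b, (f x - c) ∂μ) / (μ b).toReal := by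
    rw [integral_sub hf (integrable_const c), integral_const, measureReal_restrict_apply_univ, measureReal_def,
      smul_eq_mul, intAvg]
    field_simp
  have h1 : ENNReal.ofReal |intAvg μ f b - c| ≤ (μ b)⁻¹ * ∫⁻ x in b, u x ∂μ := by
    rw [havg, abs_div, abs_of_pos hTpos]
    have hint : ENNReal.ofReal (∫ x in b, |f x - c| ∂μ) = ∫⁻ x in b, u x ∂μ :=
      ofReal_integral_eq_lintegral_ofReal hgint.abs (ae_of_all _ fun x => abs_nonneg _)
    have habs : |∫ x in b, (f x - c) ∂μ| ≤ ∫ x in b, |f x - c| ∂μ := by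
      simpa [Real.norm_eq_abs] using
        norm_integral_le_integral_norm (μ := μ.restrict b) (f := fun x => f x - c)
    calc ENNReal.ofReal (|∫ x in b, (f x - c) ∂μ| / (μ b).toReal)
        ≤ ENNReal.ofReal ((∫ x in b, |f x - c| ∂μ) / (μ b).toReal) := by
          apply ENNReal.ofReal_le_ofReal; gcongr
      _ = ENNReal.ofReal (∫ x in b, |f x - c| ∂μ) / ENNReal.ofReal (μ b).toReal :=
          ENNReal.ofReal_div_of_pos hTpos
      _ = (∫⁻ x in b, u x ∂μ) / μ b := by rw [hint, ENNReal.ofReal_toReal hfin]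
      _ = (μ b)⁻¹ * ∫⁻ x in b, u x ∂μ := by rw [div_eq_mul_inv, mul_comm]
  set ν : Measure X := (μ b)⁻¹ • μ.restrict b with hν
  have hνuniv : ν univ = 1 := by
    rw [hν]
    simp [Measure.restrict_apply_univ, ENNReal.inv_mul_cancel h0 hfin]
  have hsm : ∀ g : X → ℝ≥0∞, ∫⁻ x, g x ∂ν = (μ b)⁻¹ * ∫⁻ x in b, g x ∂μ := fun g =>
    lintegral_smul_measure _ _
  have hjensen : (∫⁻ x, u x ∂ν) ^ r ≤ ∫⁻ x, u x ^ r ∂ν := by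
    rcases eq_or_lt_of_le hr with hr1 | hr1
    · simp [← hr1]
    · have hpq : Real.HolderConjugate r (Real.conjExponent r) :=
        Real.HolderConjugate.conjExponent hr1
      have huν : AEMeasurable u ν := hu.smul_measure _
      have hHolder := ENNReal.lintegral_mul_le_Lp_mul_Lq ν hpq huν
        (aemeasurable_const (b := (1:ℝ≥0∞)))
      simp only [Pi.mul_apply, mul_one, ENNReal.one_rpow, lintegral_const, hνuniv,
        one_mul] at hHolder
      calc (∫⁻ x, u x ∂ν) ^ r ≤ ((∫⁻ x, u x ^ r ∂ν) ^ (1/r)) ^ r :=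
            ENNReal.rpow_le_rpow hHolder hr0.le
        _ = ∫⁻ x, u x ^ r ∂ν := by
            rw [← ENNReal.rpow_mul, one_div_mul_cancel hr0.ne', ENNReal.rpow_one]
  calc ENNReal.ofReal |intAvg μ f b - c| ^ r
      ≤ ((μ b)⁻¹ * ∫⁻ x in b, u x ∂μ) ^ r := ENNReal.rpow_le_rpow h1 hr0.le
    _ = (∫⁻ x, u x ∂ν) ^ r := by rw [hsm]
    _ ≤ ∫⁻ x, u x ^ r ∂ν := hjensen
    _ = (μ b)⁻¹ * ∫⁻ x in b, u x ^ r ∂μ := hsm _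

lemma lintegral_sub_intAvg_le {f : X → ℝ} {b : Set X} (h0 : μ b ≠ 0) (hfin : μ b ≠ ∞)
    {r : ℝ} (hr : 1 ≤ r) (hf : Integrable f (μ.restrict b)) (c : ℝ) :
    ∫⁻ x in b, ENNReal.ofReal |f x - intAvg μ f b| ^ r ∂μ
      ≤ 2 ^ (r + 1) * ∫⁻ x in b, ENNReal.ofReal |f x - c| ^ r ∂μ := by
  have hr0 : (0:ℝ) < r := lt_of_lt_of_le one_pos hr
  set u : X → ℝ≥0∞ := fun x => ENNReal.ofReal |f x - c| with hu_def
  haveI : IsFiniteMeasure (μ.restrict b) :=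
    ⟨by rwa [Measure.restrict_apply_univ, lt_top_iff_ne_top]⟩
  set d : ℝ≥0∞ := ENNReal.ofReal |intAvg μ f b - c| with hd_def
  have hgint : Integrable (fun x => f x - c) (μ.restrict b) := hf.sub (integrable_const c)
  have hu : AEMeasurable u (μ.restrict b) :=
    ENNReal.measurable_ofReal.comp_aemeasurable hgint.abs.aemeasurable
  have hur : AEMeasurable (fun x => u x ^ r) (μ.restrict b) := hu.pow aemeasurable_const
  have hpt : ∀ x, ENNReal.ofReal |f x - intAvg μ f b| ^ r ≤ 2 ^ r * u x ^ r + 2 ^ r * d ^ r := by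
    intro x
    have h1 : |f x - intAvg μ f b| ≤ |f x - c| + |intAvg μ f b - c| := by
      have h := abs_sub_le (f x) c (intAvg μ f b)
      rwa [abs_sub_comm c (intAvg μ f b)] at h
    have h2 : ENNReal.ofReal |f x - intAvg μ f b| ≤ u x + d := by
      refine le_trans (ENNReal.ofReal_le_ofReal h1) ?_
      rw [ENNReal.ofReal_add (abs_nonneg _) (abs_nonneg _)]
    have h3 : (u x + d) ^ r ≤ 2 ^ r * (u x ^ r + d ^ r) := by
      have hmax : u x + d ≤ 2 * (u x ⊔ d) := by
        rw [two_mul]; exact add_le_add le_sup_left le_sup_right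
      calc (u x + d) ^ r ≤ (2 * (u x ⊔ d)) ^ r := ENNReal.rpow_le_rpow hmax hr0.le
        _ = 2 ^ r * (u x ⊔ d) ^ r := ENNReal.mul_rpow_of_nonneg _ _ hr0.le
        _ ≤ 2 ^ r * (u x ^ r + d ^ r) := by
            gcongr
            rcases le_total (u x) d with h | h
            · rw [sup_eq_right.2 h]; exact le_add_self
            · rw [sup_eq_left.2 h]; exact le_self_add
    calc ENNReal.ofReal |f x - intAvg μ f b| ^ r ≤ (u x + d) ^ r :=
          ENNReal.rpow_le_rpow h2 hr0.le
      _ ≤ 2 ^ r * (u x ^ r + d ^ r) := h3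
      _ = 2 ^ r * u x ^ r + 2 ^ r * d ^ r := by ring
  have hdb : d ^ r * μ b ≤ ∫⁻ x in b, u x ^ r ∂μ := by
    have hj := avg_rpow_le (μ := μ) h0 hfin hr hf c
    calc d ^ r * μ b ≤ ((μ b)⁻¹ * ∫⁻ x in b, u x ^ r ∂μ) * μ b :=
          mul_le_mul_left hj _
      _ = (∫⁻ x in b, u x ^ r ∂μ) * ((μ b)⁻¹ * μ b) := by ring
      _ = _ := by rw [ENNReal.inv_mul_cancel h0 hfin, mul_one]
  calc ∫⁻ x in b, ENNReal.ofReal |f x - intAvg μ f b| ^ r ∂μ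
      ≤ ∫⁻ x in b, (2 ^ r * u x ^ r + 2 ^ r * d ^ r) ∂μ := lintegral_mono hpt
    _ = 2 ^ r * ∫⁻ x in b, u x ^ r ∂μ + 2 ^ r * d ^ r * μ b := by
        rw [lintegral_add_left' (hur.const_mul _), setLIntegral_const,
          lintegral_const_mul'' _ hur]
    _ ≤ 2 ^ r * ∫⁻ x in b, u x ^ r ∂μ + 2 ^ r * ∫⁻ x in b, u x ^ r ∂μ := by
        rw [mul_assoc]
        gcongr
    _ = 2 ^ (r + 1) * ∫⁻ x in b, u x ^ r ∂μ := by
        rw [ENNReal.rpow_add r 1 two_ne_zero ENNReal.ofNat_ne_top, ENNReal.rpow_one]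
        ring

lemma sharpAvg_le_of_subset {f : X → ℝ} {A W : Set X} {r : ℝ} (hr : 1 ≤ r)
    (hA0 : μ A ≠ 0) (hAfin : μ A ≠ ∞) (hW0 : μ W ≠ 0) (hWfin : μ W ≠ ∞)
    (hsub : A ⊆ W) (hf : Integrable f (μ.restrict W)) :
    sharpAvg μ f A r ≤ ((μ A)⁻¹ * (2 ^ (r + 1) * μ W)) ^ (1 / r) * sharpAvg μ f W r := by
  have hr0 : (0:ℝ) < r := lt_of_lt_of_le one_pos hr
  have h1r : (0:ℝ) ≤ 1 / r := by positivity
  have hfA : Integrable f (μ.restrict A) := hf.mono_measure (Measure.restrict_mono hsub le_rfl)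
  have hIA : ∫⁻ x in A, ENNReal.ofReal |f x - intAvg μ f A| ^ r ∂μ
      ≤ 2 ^ (r + 1) * ∫⁻ x in W, ENNReal.ofReal |f x - intAvg μ f W| ^ r ∂μ := by
    refine le_trans (lintegral_sub_intAvg_le hA0 hAfin hr hfA (intAvg μ f W)) ?_
    gcongr
  have key : (μ A)⁻¹ * ∫⁻ x in A, ENNReal.ofReal |f x - intAvg μ f A| ^ r ∂μ
      ≤ ((μ A)⁻¹ * (2 ^ (r + 1) * μ W)) *
        ((μ W)⁻¹ * ∫⁻ x in W, ENNReal.ofReal |f x - intAvg μ f W| ^ r ∂μ) := by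
    calc (μ A)⁻¹ * ∫⁻ x in A, ENNReal.ofReal |f x - intAvg μ f A| ^ r ∂μ
        ≤ (μ A)⁻¹ * (2 ^ (r + 1) *
            ∫⁻ x in W, ENNReal.ofReal |f x - intAvg μ f W| ^ r ∂μ) :=
          mul_le_mul_right hIA _
      _ = ((μ A)⁻¹ * (2 ^ (r + 1) * μ W)) *
          ((μ W)⁻¹ * ∫⁻ x in W, ENNReal.ofReal |f x - intAvg μ f W| ^ r ∂μ) := by
          rw [show ((μ A)⁻¹ * (2 ^ (r + 1) * μ W)) *
              ((μ W)⁻¹ * ∫⁻ x in W, ENNReal.ofReal |f x - intAvg μ f W| ^ r ∂μ)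
              = (μ A)⁻¹ * (2 ^ (r + 1) * ((μ W * (μ W)⁻¹) *
                  ∫⁻ x in W, ENNReal.ofReal |f x - intAvg μ f W| ^ r ∂μ)) by ring,
            ENNReal.mul_inv_cancel hW0 hWfin, one_mul]
  calc sharpAvg μ f A r
      = ((μ A)⁻¹ * ∫⁻ x in A, ENNReal.ofReal |f x - intAvg μ f A| ^ r ∂μ) ^ (1 / r) := rfl
    _ ≤ (((μ A)⁻¹ * (2 ^ (r + 1) * μ W)) *
          ((μ W)⁻¹ * ∫⁻ x in W, ENNReal.ofReal |f x - intAvg μ f W| ^ r ∂μ)) ^ (1 / r) :=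
        ENNReal.rpow_le_rpow key h1r
    _ = ((μ A)⁻¹ * (2 ^ (r + 1) * μ W)) ^ (1 / r) *
          ((μ W)⁻¹ * ∫⁻ x in W, ENNReal.ofReal |f x - intAvg μ f W| ^ r ∂μ) ^ (1 / r) :=
        ENNReal.mul_rpow_of_nonneg _ _ h1r
    _ = ((μ A)⁻¹ * (2 ^ (r + 1) * μ W)) ^ (1 / r) * sharpAvg μ f W r := rfl

end AuxSharp

/-- `⟨f⟩*_{#,B} ≤ essinf_B M_# f ≲ ⟨f⟩*_{#,B}` (Proposition 1). -/
theorem starSharp_comparable_essInf_Msharp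
    {X : Type*} [MeasurableSpace X] (μ : Measure X) (𝓑 : BallBasis X μ)
    (r : ℝ) (hr : 1 ≤ r) :
    ∃ C : ℝ, 0 < C ∧
      ∀ f : X → ℝ, MemLp f (ENNReal.ofReal r) μ →
        ∀ B ∈ 𝓑.balls,
          starSharp μ 𝓑 f B r ≤ essInf (fun y => Msharp μ 𝓑 f r y) (μ.restrict B) ∧
          essInf (fun y => Msharp μ 𝓑 f r y) (μ.restrict B) ≤
            ENNReal.ofReal C * starSharp μ 𝓑 f B r := by
  have hr0 : (0:ℝ) < r := lt_of_lt_of_le one_pos hr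
  have h1r : (0:ℝ) ≤ 1 / r := by positivity
  have hKtop : 𝓑.K ≠ ⊤ := 𝓑.K_lt_top.ne
  have hK0 : 𝓑.K ≠ 0 := 𝓑.K_pos.ne'
  have h2top : (2:ℝ≥0∞) ^ (r + 1) ≠ ⊤ :=
    ENNReal.rpow_ne_top_of_nonneg (by linarith) ENNReal.ofNat_ne_top
  have h2top2 : (2:ℝ≥0∞) ^ (r + 2) ≠ ⊤ :=
    ENNReal.rpow_ne_top_of_nonneg (by linarith) ENNReal.ofNat_ne_top
  have h2z : (2:ℝ≥0∞) ^ (r + 1) ≠ 0 :=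
    (ENNReal.rpow_pos (by norm_num) ENNReal.ofNat_ne_top).ne'
  set c₁ : ℝ≥0∞ := (2 ^ (r + 1) * 𝓑.K) ^ (1 / r) with hc₁
  set c₂ : ℝ≥0∞ := (2 ^ (r + 2) * (𝓑.K * 𝓑.K)) ^ (1 / r) with hc₂
  set M : ℝ≥0∞ := c₁ ⊔ c₂ with hM
  have hc₁top : c₁ ≠ ⊤ := ENNReal.rpow_ne_top_of_nonneg h1r (ENNReal.mul_ne_top h2top hKtop)
  have hc₂top : c₂ ≠ ⊤ := ENNReal.rpow_ne_top_of_nonneg h1r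
    (ENNReal.mul_ne_top h2top2 (ENNReal.mul_ne_top hKtop hKtop))
  have hMtop : M ≠ ⊤ := by
    rw [hM]
    simp [max_eq_top, hc₁top, hc₂top]
  have hc₁pos : 0 < c₁ :=
    ENNReal.rpow_pos (ENNReal.mul_pos h2z hK0) (ENNReal.mul_ne_top h2top hKtop)
  have hM0 : M ≠ 0 := (lt_of_lt_of_le hc₁pos le_sup_left).ne'
  refine ⟨M.toReal, ENNReal.toReal_pos hM0 hMtop, ?_⟩
  intro f hf B hB
  have hofReal : ENNReal.ofReal M.toReal = M := ENNReal.ofReal_toReal hMtop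
  have hBmeas := 𝓑.meas B hB
  have hB0 : μ B ≠ 0 := (𝓑.pos B hB).ne'
  have hBfin : μ B ≠ ∞ := (𝓑.lt_top B hB).ne
  constructor
  · refine le_essInf_of_ae_le _ ((ae_restrict_iff' hBmeas).2 (ae_of_all _ fun y hy => ?_))
    simp only [starSharp, Msharp]
    refine iSup_le fun A => iSup_le fun hA => iSup_le fun hBA => ?_
    exact le_iSup_of_le A (le_iSup_of_le hA (le_iSup_of_le (hBA hy) le_rfl))
  · rw [hofReal]
    set S := starSharp μ 𝓑 f B r with hS
    have hmem : ∀ A ∈ 𝓑.balls, B ⊆ A → sharpAvg μ f A r ≤ S := by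
      intro A hA hBA
      rw [hS, starSharp]
      exact le_iSup_of_le A (le_iSup_of_le hA (le_iSup_of_le hBA le_rfl))
    by_cases hStop : S = ⊤
    · rw [hStop, ENNReal.mul_top hM0]; exact le_top
    have hW := 𝓑.hull_mem B hB
    have hW0 : μ (𝓑.hull B) ≠ 0 := (𝓑.pos _ hW).ne'
    have hWfin : μ (𝓑.hull B) ≠ ∞ := (𝓑.lt_top _ hW).ne
    have hBW : B ⊆ 𝓑.hull B :=
      𝓑.hull_sub B hB B hB (le_mul_of_one_le_left zero_le one_le_two)
        (by rw [inter_self]; exact nonempty_of_measure_ne_zero hB0)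
    have hSW : sharpAvg μ f (𝓑.hull B) r ≤ S := hmem _ hW hBW
    set J := ∫⁻ x in 𝓑.hull B, ENNReal.ofReal |f x - intAvg μ f (𝓑.hull B)| ^ r ∂μ with hJdef
    have hJ : J ≤ 𝓑.K * (μ B * S ^ r) := by
      have h1 : J = μ (𝓑.hull B) * ((μ (𝓑.hull B))⁻¹ * J) := by
        rw [← mul_assoc, ENNReal.mul_inv_cancel hW0 hWfin, one_mul]
      have h2 : (μ (𝓑.hull B))⁻¹ * J = (sharpAvg μ f (𝓑.hull B) r) ^ r := by
        rw [sharpAvg, ← ENNReal.rpow_mul, one_div_mul_cancel hr0.ne', ENNReal.rpow_one]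
      calc J = μ (𝓑.hull B) * ((μ (𝓑.hull B))⁻¹ * J) := h1
        _ ≤ (𝓑.K * μ B) * (S ^ r) := by
            rw [h2]
            exact mul_le_mul (𝓑.hull_bound B hB) (ENNReal.rpow_le_rpow hSW hr0.le)
              zero_le zero_le
        _ = 𝓑.K * (μ B * S ^ r) := by ring
    refine ENNReal.le_of_forall_pos_le_add fun ε hε hMS => ?_
    set lam : ℝ≥0∞ := c₂ * S + ε with hlam
    have hεpos : (0:ℝ≥0∞) < ε := ENNReal.coe_pos.2 hε
    have hlam0 : lam ≠ 0 := (lt_of_lt_of_le hεpos le_add_self).ne'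
    have hlamtop : lam ≠ ⊤ :=
      ENNReal.add_ne_top.2 ⟨ENNReal.mul_ne_top hc₂top hStop, ENNReal.coe_ne_top⟩
    have hlamr0 : lam ^ r ≠ 0 :=
      (ENNReal.rpow_pos (pos_iff_ne_zero.2 hlam0) hlamtop).ne'
    have hlamrtop : lam ^ r ≠ ⊤ := ENNReal.rpow_ne_top_of_nonneg hr0.le hlamtop
    have hlamr : 2 ^ (r + 2) * (𝓑.K * 𝓑.K) * S ^ r ≤ lam ^ r := by
      have h1 : c₂ * S ≤ lam := le_self_add
      have h2 : (c₂ * S) ^ r = 2 ^ (r + 2) * (𝓑.K * 𝓑.K) * S ^ r := by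
        rw [ENNReal.mul_rpow_of_nonneg _ _ hr0.le, hc₂, ← ENNReal.rpow_mul,
          one_div_mul_cancel hr0.ne', ENNReal.rpow_one]
      rw [← h2]
      exact ENNReal.rpow_le_rpow h1 hr0.le
    set t : Set (Set X) := {A | A ∈ 𝓑.balls ∧ (A ∩ B).Nonempty ∧ μ A ≤ 2 * μ B ∧
      lam < sharpAvg μ f A r} with ht
    have ht_balls : ∀ A ∈ t, A ∈ 𝓑.balls := fun A hA => hA.1
    have ht_sub : ∀ A ∈ t, A ⊆ 𝓑.hull B := fun A hA =>
      𝓑.hull_sub B hB A hA.1 hA.2.2.1 hA.2.1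
    obtain ⟨u, hut, hdisj, hcov⟩ :=
      Vitali.exists_disjoint_subfamily_covering_enlargement (fun A : Set X => A) t
        (fun A => (μ A).toReal) 2 one_lt_two (fun A _ => ENNReal.toReal_nonneg)
        (2 * μ B).toReal
        (fun A hA => (ENNReal.toReal_le_toReal (𝓑.lt_top A hA.1).ne
          (ENNReal.mul_ne_top ENNReal.ofNat_ne_top hBfin)).2 hA.2.2.1)
        (fun A hA => Set.Nonempty.mono inter_subset_left hA.2.1)
    have hucount : u.Countable := by
      have hmble : ∀ i : ↥u, MeasurableSet (i : Set X) := fun i =>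
        𝓑.meas _ (ht_balls _ (hut i.2))
      have hpd : Pairwise (Function.onFun Disjoint fun i : ↥u => (i : Set X)) := fun i j hij =>
        hdisj i.2 j.2 fun h => hij (Subtype.ext h)
      have hfin : μ (⋃ i : ↥u, (i : Set X)) ≠ ⊤ := by
        refine (lt_of_le_of_lt (measure_mono ?_) (𝓑.lt_top _ hW)).ne
        exact iUnion_subset fun i => ht_sub _ (hut i.2)
      have hcnt := MeasureTheory.Measure.countable_meas_pos_of_disjoint_of_meas_iUnion_ne_top
        μ hmble hpd hfin
      have huniv : {i : ↥u | 0 < μ (i : Set X)} = univ :=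
        eq_univ_of_forall fun i => 𝓑.pos _ (ht_balls _ (hut i.2))
      rw [huniv, Set.countable_univ_iff] at hcnt
      exact Set.countable_coe_iff.1 hcnt
    have hcover : ⋃₀ t ⊆ ⋃ b ∈ u, 𝓑.hull b := by
      rintro x ⟨a, hat, hxa⟩
      obtain ⟨b, hbu, hab, hδ⟩ := hcov a hat
      have hba := hut hbu
      have hμab : μ a ≤ 2 * μ b := by
        have h1 : (μ a).toReal ≤ (2 * μ b).toReal := by
          rw [ENNReal.toReal_mul]
          simpa using hδ
        exact (ENNReal.toReal_le_toReal (𝓑.lt_top a hat.1).ne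
          (ENNReal.mul_ne_top ENNReal.ofNat_ne_top (𝓑.lt_top b hba.1).ne)).1 h1
      exact mem_biUnion hbu ((𝓑.hull_sub b hba.1 a hat.1 hμab hab) hxa)
    have hsum : lam ^ r * ∑' (b : ↥u), μ (b : Set X) ≤ 2 ^ (r + 1) * J := by
      rw [← ENNReal.tsum_mul_left]
      have hble : ∀ b : ↥u, lam ^ r * μ (b : Set X) ≤
          2 ^ (r + 1) * ∫⁻ x in (b : Set X),
            ENNReal.ofReal |f x - intAvg μ f (𝓑.hull B)| ^ r ∂μ := by
        intro b
        have hbt : (b : Set X) ∈ t := hut b.2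
        have hbb := hbt.1
        have hb0 : μ (b : Set X) ≠ 0 := (𝓑.pos _ hbb).ne'
        have hbfin : μ (b : Set X) ≠ ∞ := (𝓑.lt_top _ hbb).ne
        have hlamle : lam ^ r ≤ (μ (b : Set X))⁻¹ * ∫⁻ x in (b : Set X),
            ENNReal.ofReal |f x - intAvg μ f (b : Set X)| ^ r ∂μ := by
          have h1 : lam ≤ sharpAvg μ f (b : Set X) r := hbt.2.2.2.le
          have h2 := ENNReal.rpow_le_rpow h1 hr0.le
          rwa [sharpAvg, ← ENNReal.rpow_mul, one_div_mul_cancel hr0.ne',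
            ENNReal.rpow_one] at h2
        have h2 : lam ^ r * μ (b : Set X) ≤ ∫⁻ x in (b : Set X),
            ENNReal.ofReal |f x - intAvg μ f (b : Set X)| ^ r ∂μ := by
          calc lam ^ r * μ (b : Set X)
              ≤ ((μ (b : Set X))⁻¹ * ∫⁻ x in (b : Set X),
                  ENNReal.ofReal |f x - intAvg μ f (b : Set X)| ^ r ∂μ) * μ (b : Set X) :=
                mul_le_mul_left hlamle _
            _ = (∫⁻ x in (b : Set X), ENNReal.ofReal |f x - intAvg μ f (b : Set X)| ^ r ∂μ) *
                  ((μ (b : Set X))⁻¹ * μ (b : Set X)) := by ring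
            _ = _ := by rw [ENNReal.inv_mul_cancel hb0 hbfin, mul_one]
        exact h2.trans (lintegral_sub_intAvg_le hb0 hbfin hr
          (memLp_integrableOn hr hf hbfin) _)
      refine le_trans (ENNReal.tsum_le_tsum hble) ?_
      rw [ENNReal.tsum_mul_left]
      refine mul_le_mul_right ?_ _
      rw [← lintegral_biUnion hucount (fun b hb => 𝓑.meas b (ht_balls b (hut hb))) hdisj]
      exact lintegral_mono_set (iUnion₂_subset fun b hb => ht_sub b (hut hb))
    have hEst : 2 * μ (⋃₀ t) ≤ μ B := by
      have h1 : μ (⋃₀ t) ≤ 𝓑.K * ∑' (b : ↥u), μ (b : Set X) := by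
        refine le_trans (measure_mono hcover) ?_
        refine le_trans (measure_biUnion_le μ hucount _) ?_
        rw [← ENNReal.tsum_mul_left]
        exact ENNReal.tsum_le_tsum fun b => 𝓑.hull_bound _ (ht_balls _ (hut b.2))
      have h2 : lam ^ r * (2 * μ (⋃₀ t)) ≤ lam ^ r * μ B := by
        calc lam ^ r * (2 * μ (⋃₀ t))
            ≤ lam ^ r * (2 * (𝓑.K * ∑' (b : ↥u), μ (b : Set X))) :=
              mul_le_mul_right (mul_le_mul_right h1 2) _
          _ = 2 * 𝓑.K * (lam ^ r * ∑' (b : ↥u), μ (b : Set X)) := by ring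
          _ ≤ 2 * 𝓑.K * (2 ^ (r + 1) * J) := mul_le_mul_right hsum _
          _ ≤ 2 * 𝓑.K * (2 ^ (r + 1) * (𝓑.K * (μ B * S ^ r))) :=
              mul_le_mul_right (mul_le_mul_right hJ _) _
          _ = (2 ^ (r + 2) * (𝓑.K * 𝓑.K) * S ^ r) * μ B := by
              rw [show r + 2 = (r + 1) + 1 by ring,
                ENNReal.rpow_add (r + 1) 1 two_ne_zero ENNReal.ofNat_ne_top, ENNReal.rpow_one]
              ring
          _ ≤ lam ^ r * μ B := mul_le_mul_left hlamr _
      exact (ENNReal.mul_le_mul_iff_right hlamr0 hlamrtop).1 h2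
    set G := B \ ⋃₀ t with hG
    have hGpos : μ G ≠ 0 := by
      intro hzero
      have h1 : μ B ≤ μ (⋃₀ t) := by
        have hsub2 : B ⊆ G ∪ ⋃₀ t := fun y hy => by
          by_cases hyt : y ∈ ⋃₀ t
          · exact Or.inr hyt
          · exact Or.inl ⟨hy, hyt⟩
        calc μ B ≤ μ (G ∪ ⋃₀ t) := measure_mono hsub2
          _ ≤ μ G + μ (⋃₀ t) := measure_union_le _ _
          _ = μ (⋃₀ t) := by rw [hzero, zero_add]
      have h2 : μ B + μ B ≤ μ B := by
        calc μ B + μ B = 2 * μ B := (two_mul _).symm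
          _ ≤ 2 * μ (⋃₀ t) := mul_le_mul_right h1 2
          _ ≤ μ B := hEst
      have h3 : μ B ≤ 0 := (ENNReal.add_le_add_iff_left hBfin).1 (by simpa using h2)
      exact hB0 (le_antisymm h3 zero_le)
    have hpt : ∀ y ∈ G, Msharp μ 𝓑 f r y ≤ M * S + ε := by
      intro y hy
      rw [Msharp]
      refine iSup_le fun A => iSup_le fun hA => iSup_le fun hyA => ?_
      by_cases hsmall : μ A ≤ 2 * μ B
      · by_cases hlarge : lam < sharpAvg μ f A r
        · exact absurd (⟨A, ⟨hA, ⟨y, hyA, hy.1⟩, hsmall, hlarge⟩, hyA⟩ : y ∈ ⋃₀ t) hy.2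
        · push_neg at hlarge
          refine hlarge.trans ?_
          rw [hlam]
          exact add_le_add_left (mul_le_mul_left le_sup_right S) _
      · have hA0 : μ A ≠ 0 := (𝓑.pos A hA).ne'
        have hAfin : μ A ≠ ∞ := (𝓑.lt_top A hA).ne
        have hAW := 𝓑.hull_mem A hA
        have hAW0 : μ (𝓑.hull A) ≠ 0 := (𝓑.pos _ hAW).ne'
        have hAWfin : μ (𝓑.hull A) ≠ ∞ := (𝓑.lt_top _ hAW).ne
        have hAsub : A ⊆ 𝓑.hull A := 𝓑.hull_sub A hA A hA
          (le_mul_of_one_le_left zero_le one_le_two)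
          (by rw [inter_self]; exact nonempty_of_measure_ne_zero hA0)
        have hBsubA : B ⊆ 𝓑.hull A := by
          refine 𝓑.hull_sub A hA B hB ?_ ⟨y, hy.1, hyA⟩
          push_neg at hsmall
          calc μ B ≤ 2 * μ B := le_mul_of_one_le_left zero_le one_le_two
            _ ≤ μ A := hsmall.le
            _ ≤ 2 * μ A := le_mul_of_one_le_left zero_le one_le_two
        have hfint : Integrable f (μ.restrict (𝓑.hull A)) := memLp_integrableOn hr hf hAWfin
        have h3 := sharpAvg_le_of_subset (μ := μ) hr hA0 hAfin hAW0 hAWfin hAsub hfint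
        have hcoef : ((μ A)⁻¹ * (2 ^ (r + 1) * μ (𝓑.hull A))) ^ (1 / r) ≤ c₁ := by
          rw [hc₁]
          refine ENNReal.rpow_le_rpow ?_ h1r
          calc (μ A)⁻¹ * (2 ^ (r + 1) * μ (𝓑.hull A))
              ≤ (μ A)⁻¹ * (2 ^ (r + 1) * (𝓑.K * μ A)) :=
                mul_le_mul_right (mul_le_mul_right (𝓑.hull_bound A hA) _) _
            _ = 2 ^ (r + 1) * 𝓑.K * ((μ A)⁻¹ * μ A) := by ring
            _ = 2 ^ (r + 1) * 𝓑.K := by rw [ENNReal.inv_mul_cancel hA0 hAfin, mul_one]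
        have hup : sharpAvg μ f (𝓑.hull A) r ≤ S := hmem _ hAW hBsubA
        calc sharpAvg μ f A r
            ≤ ((μ A)⁻¹ * (2 ^ (r + 1) * μ (𝓑.hull A))) ^ (1 / r) *
              sharpAvg μ f (𝓑.hull A) r := h3
          _ ≤ c₁ * S := mul_le_mul hcoef hup zero_le zero_le
          _ ≤ M * S := mul_le_mul_left le_sup_left _
          _ ≤ M * S + ε := le_self_add
    refine essInf_le_of_meas_pos ?_
    rw [Measure.restrict_apply' hBmeas]
    intro hzero
    refine hGpos (measure_mono_null ?_ hzero)
    intro y hy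
    exact ⟨hpt y hy, hy.1⟩
end
end

section
/- Let (X, M, μ) be a measure space with a ball-basis B and 1 ≤ r < ∞. Then for every f ∈ L^r(X), every ball B ∈ B, and every 0 < α < 1, OSC_{B,α}(M f) ≤ C (1−α)^{−1/r} ⟨f⟩*_{#,B}, where M is the maximal operator M f(x) = sup_{B ∈ B, B ∋ x} (μ(B)⁻¹ ∫_B |f|^r)^{1/r} and C depends only on the ball-basis constant K. In particular, the maximal operator M is strongly dominated by the sharp maximal operator M_#. -/
open MeasureTheory ENNReal Set Filter

noncomputable section

variable {X : Type*} [MeasurableSpace X]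

namespace OscAux

variable {μ : Measure X}

lemma rpow_collapse1 {r : ℝ} (hr : r ≠ 0) (x : ℝ≥0∞) : (x ^ (1/r)) ^ r = x := by
  rw [← ENNReal.rpow_mul, one_div_mul_cancel hr, ENNReal.rpow_one]

lemma rpow_collapse2 {r : ℝ} (hr : r ≠ 0) (x : ℝ≥0∞) : (x ^ r) ^ (1/r) = x := by
  rw [← ENNReal.rpow_mul, mul_one_div_cancel hr, ENNReal.rpow_one]

lemma jensen_prob (ν : Measure X) [IsProbabilityMeasure ν] {g : X → ℝ≥0∞}
    (hg : AEMeasurable g ν) {r : ℝ} (hr : 1 ≤ r) :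
    ∫⁻ x, g x ∂ν ≤ (∫⁻ x, g x ^ r ∂ν) ^ (1/r) := by
  rcases eq_or_lt_of_le hr with h1 | h1
  · simp [← h1]
  · have hpq : r.HolderConjugate (Real.conjExponent r) :=
      Real.HolderConjugate.conjExponent h1
    have H := ENNReal.lintegral_mul_le_Lp_mul_Lq ν hpq hg
      (aemeasurable_const (b := (1:ℝ≥0∞)))
    simpa [lintegral_one, measure_univ] using H

end OscAux

namespace OscAux2
open OscAux
variable {μ : Measure X}

lemma prob_instance {A : Set X} (h0 : μ A ≠ 0) (ht : μ A ≠ ⊤) :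
    IsProbabilityMeasure ((μ A)⁻¹ • μ.restrict A) := by
  constructor
  simp [Measure.smul_apply, Measure.restrict_apply_univ, smul_eq_mul,
    ENNReal.inv_mul_cancel h0 ht]

lemma avg_triangle {A : Set X} (h0 : μ A ≠ 0) (ht : μ A ≠ ⊤) {f : X → ℝ}
    (hf : AEMeasurable f (μ.restrict A)) {r : ℝ} (hr : 1 ≤ r) (c : ℝ) :
    ((μ A)⁻¹ * ∫⁻ x in A, (ENNReal.ofReal |f x|) ^ r ∂μ) ^ (1/r) ≤
      ((μ A)⁻¹ * ∫⁻ x in A, (ENNReal.ofReal |f x - c|) ^ r ∂μ) ^ (1/r)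
        + ENNReal.ofReal |c| := by
  have hr0 : (0:ℝ) < r := lt_of_lt_of_le zero_lt_one hr
  set ν := (μ A)⁻¹ • μ.restrict A with hν
  haveI := prob_instance h0 ht
  have e1 : ∀ (G : X → ℝ≥0∞), (μ A)⁻¹ * ∫⁻ x in A, G x ∂μ = ∫⁻ x, G x ∂ν := by
    intro G; rw [hν, lintegral_smul_measure, smul_eq_mul]
  rw [e1, e1]
  have hφ : AEMeasurable (fun x => ENNReal.ofReal |f x - c|) ν := by
    have : AEMeasurable (fun x => f x - c) ν := by
      exact AEMeasurable.smul_measure (hf.sub aemeasurable_const) _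
    exact ENNReal.measurable_ofReal.comp_aemeasurable (continuous_abs.measurable.comp_aemeasurable this)
  have hpt : ∀ x, ENNReal.ofReal |f x| ≤
      ENNReal.ofReal |f x - c| + ENNReal.ofReal |c| := by
    intro x
    rw [← ENNReal.ofReal_add (abs_nonneg _) (abs_nonneg _)]
    exact ENNReal.ofReal_le_ofReal (by
      calc |f x| = |(f x - c) + c| := by ring_nf
      _ ≤ |f x - c| + |c| := abs_add_le _ _)
  calc (∫⁻ x, (ENNReal.ofReal |f x|) ^ r ∂ν) ^ (1/r)
      ≤ (∫⁻ x, (ENNReal.ofReal |f x - c| + ENNReal.ofReal |c|) ^ r ∂ν) ^ (1/r) := by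
        apply ENNReal.rpow_le_rpow _ (by positivity)
        exact lintegral_mono fun x => ENNReal.rpow_le_rpow (hpt x) hr0.le
    _ ≤ (∫⁻ x, (ENNReal.ofReal |f x - c|) ^ r ∂ν) ^ (1/r)
        + (∫⁻ x, (ENNReal.ofReal |c| : ℝ≥0∞) ^ r ∂ν) ^ (1/r) :=
        ENNReal.lintegral_Lp_add_le hφ aemeasurable_const hr
    _ = (∫⁻ x, (ENNReal.ofReal |f x - c|) ^ r ∂ν) ^ (1/r) + ENNReal.ofReal |c| := by
        rw [lintegral_const, measure_univ, mul_one, rpow_collapse2 hr0.ne']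

lemma jensen_avg {A : Set X} (h0 : μ A ≠ 0) (ht : μ A ≠ ⊤) {f : X → ℝ}
    (hf : AEMeasurable f (μ.restrict A)) {r : ℝ} (hr : 1 ≤ r) :
    ENNReal.ofReal |(∫ x in A, f x ∂μ) / (μ A).toReal| ≤
      ((μ A)⁻¹ * ∫⁻ x in A, (ENNReal.ofReal |f x|) ^ r ∂μ) ^ (1/r) := by
  set ν := (μ A)⁻¹ • μ.restrict A with hν
  haveI := prob_instance h0 ht
  have e1 : ∀ (G : X → ℝ≥0∞), (μ A)⁻¹ * ∫⁻ x in A, G x ∂μ = ∫⁻ x, G x ∂ν := by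
    intro G; rw [hν, lintegral_smul_measure, smul_eq_mul]
  rw [e1]
  have eint : (∫ x in A, f x ∂μ) / (μ A).toReal = ∫ x, f x ∂ν := by
    rw [hν, integral_smul_measure, smul_eq_mul, ENNReal.toReal_inv,
      div_eq_inv_mul]
  rw [eint]
  have hg : AEMeasurable (fun x => ENNReal.ofReal |f x|) ν :=
    ENNReal.measurable_ofReal.comp_aemeasurable
      (continuous_abs.measurable.comp_aemeasurable (AEMeasurable.smul_measure hf _))
  calc ENNReal.ofReal |∫ x, f x ∂ν| = ↑‖∫ x, f x ∂ν‖₊ := by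
        rw [← enorm_eq_nnnorm, ← ofReal_norm, Real.norm_eq_abs]
    _ ≤ ∫⁻ x, ‖f x‖₊ ∂ν := enorm_integral_le_lintegral_enorm _
    _ = ∫⁻ x, ENNReal.ofReal |f x| ∂ν := by
        congr 1 with x
        rw [← enorm_eq_nnnorm, ← ofReal_norm, Real.norm_eq_abs]
    _ ≤ (∫⁻ x, (ENNReal.ofReal |f x|) ^ r ∂ν) ^ (1/r) := jensen_prob ν hg hr

lemma avg_enlarge {A A' : Set X} (h : A ⊆ A') {K' : ℝ≥0∞}
    (hK : μ A' ≤ K' * μ A) (h0 : μ A ≠ 0) (ht : μ A ≠ ⊤) (ht' : μ A' ≠ ⊤)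
    {r : ℝ} (hr : 0 < r) (G : X → ℝ≥0∞) :
    ((μ A)⁻¹ * ∫⁻ x in A, G x ∂μ) ^ (1/r) ≤
      K' ^ (1/r) * ((μ A')⁻¹ * ∫⁻ x in A', G x ∂μ) ^ (1/r) := by
  have h0' : μ A' ≠ 0 := fun hz => h0 (le_antisymm (hz ▸ measure_mono h) zero_le)
  have hinv : (μ A)⁻¹ ≤ K' * (μ A')⁻¹ := by
    rw [← div_eq_mul_inv]
    rw [ENNReal.le_div_iff_mul_le (Or.inl h0') (Or.inl ht')]
    calc (μ A)⁻¹ * μ A' ≤ (μ A)⁻¹ * (K' * μ A) := mul_le_mul' le_rfl hK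
      _ = K' * ((μ A)⁻¹ * μ A) := by ring
      _ = K' := by rw [ENNReal.inv_mul_cancel h0 ht, mul_one]
  calc ((μ A)⁻¹ * ∫⁻ x in A, G x ∂μ) ^ (1/r)
      ≤ ((K' * (μ A')⁻¹) * ∫⁻ x in A', G x ∂μ) ^ (1/r) :=
        ENNReal.rpow_le_rpow (mul_le_mul' hinv (lintegral_mono_set h)) (by positivity)
    _ = K' ^ (1/r) * ((μ A')⁻¹ * ∫⁻ x in A', G x ∂μ) ^ (1/r) := by
        rw [mul_assoc, ENNReal.mul_rpow_of_nonneg _ _ (by positivity : (0:ℝ) ≤ 1/r)]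

end OscAux2


/-- oscillation bound for the maximal function by the sharp maximal
quantities (Theorem 2): `OSC_{B,α}(M f) ≤ C (1−α)^{−1/r} ⟨f⟩*_{#,B}`. -/
theorem osc_maximal_le_starSharp
    {X : Type*} [MeasurableSpace X] (μ : Measure X) (𝓑 : BallBasis X μ)
    (r : ℝ) (hr : 1 ≤ r) :
    ∃ C : ℝ, 0 < C ∧
      ∀ f : X → ℝ, MemLp f (ENNReal.ofReal r) μ →
        ∀ B ∈ 𝓑.balls, ∀ α : ℝ, 0 < α → α < 1 →
          eOSCa μ (fun x => Mmax μ 𝓑 f r x) B α ≤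
            ENNReal.ofReal (C * (1 - α) ^ (-(1 / r))) * starSharp μ 𝓑 f B r := by
  classical
  have hr0 : (0:ℝ) < r := lt_of_lt_of_le zero_lt_one hr
  have hrne : r ≠ 0 := hr0.ne'
  have h1r : (0:ℝ) < 1/r := by positivity
  have hKt : 𝓑.K ≠ ⊤ := 𝓑.K_lt_top.ne
  have hK0 : 𝓑.K ≠ 0 := 𝓑.K_pos.ne'
  set κ := 𝓑.K.toReal with hκdef
  have hκ0 : 0 < κ := ENNReal.toReal_pos hK0 hKt
  have hKeq : 𝓑.K = ENNReal.ofReal κ := (ENNReal.ofReal_toReal hKt).symm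
  have hCpos : 0 < κ ^ (1/r) + (κ*κ) ^ (1/r) + 1 := by
    have h1 : (0:ℝ) ≤ κ ^ (1/r) := Real.rpow_nonneg hκ0.le _
    have h2 : (0:ℝ) ≤ (κ*κ) ^ (1/r) := Real.rpow_nonneg (by positivity) _
    linarith
  refine ⟨κ ^ (1/r) + (κ*κ) ^ (1/r) + 1, hCpos, ?_⟩
  intro f hf B hB α hα0 hα1
  have h1α : (0:ℝ) < 1 - α := by linarith
  set σ := starSharp μ 𝓑 f B r with hσdef
  by_cases hσtop : σ = ⊤
  · rw [hσtop, ENNReal.mul_top]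
    · exact le_top
    · have ht : (0:ℝ) < (1 - α) ^ (-(1/r)) := Real.rpow_pos_of_pos h1α _
      simp only [ne_eq, ENNReal.ofReal_eq_zero, not_le]
      nlinarith
  have hfae : AEMeasurable f μ := hf.aestronglyMeasurable.aemeasurable
  have hBne : B.Nonempty := nonempty_of_measure_ne_zero (𝓑.pos B hB).ne'
  set Bs := 𝓑.hull B with hBsdef
  have hBsmem : Bs ∈ 𝓑.balls := 𝓑.hull_mem B hB
  have hBBs : B ⊆ Bs := 𝓑.hull_sub B hB B hB
    (le_mul_of_one_le_left zero_le one_le_two) (by simpa using hBne)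
  have hb0 : ∀ A ∈ 𝓑.balls, μ A ≠ 0 := fun A hA => (𝓑.pos A hA).ne'
  have hbt : ∀ A ∈ 𝓑.balls, μ A ≠ ⊤ := fun A hA => (𝓑.lt_top A hA).ne
  have hσB : ∀ A ∈ 𝓑.balls, B ⊆ A → sharpAvg μ f A r ≤ σ := by
    intro A hA hBA
    rw [hσdef, starSharp]
    exact le_iSup_of_le A (le_iSup_of_le hA (le_iSup_of_le hBA le_rfl))
  have hMge : ∀ (y : X) (A : Set X), A ∈ 𝓑.balls → y ∈ A →
      avgPow μ f A r ≤ Mmax μ 𝓑 f r y := by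
    intro y A hA hy
    rw [Mmax]
    exact le_iSup_of_le A (le_iSup_of_le hA (le_iSup_of_le hy le_rfl))
  set c := intAvg μ f Bs with hc
  set g : X → ℝ := Bs.indicator (fun x => f x - c) with hgdef
  set I := ∫⁻ x, (ENNReal.ofReal |g x|) ^ r ∂μ with hIdef
  have hIeq : I = ∫⁻ x in Bs, (ENNReal.ofReal |f x - c|) ^ r ∂μ := by
    rw [hIdef, ← lintegral_indicator (𝓑.meas Bs hBsmem)]
    congr 1 with x
    by_cases hx : x ∈ Bs
    · simp only [hgdef, indicator_of_mem hx]
    · simp only [hgdef, indicator_of_notMem hx, abs_zero, ENNReal.ofReal_zero,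
        ENNReal.zero_rpow_of_pos hr0, indicator_of_notMem hx]
  have hsharpBs : ((μ Bs)⁻¹ * I) ^ (1/r) ≤ σ := by
    rw [hIeq]
    have h1 := hσB Bs hBsmem hBBs
    rw [sharpAvg, ← hc] at h1
    exact h1
  have hIle : I ≤ μ Bs * σ ^ r := by
    have h2 : (μ Bs)⁻¹ * I ≤ σ ^ r := by
      have h3 := ENNReal.rpow_le_rpow hsharpBs hr0.le
      rwa [OscAux.rpow_collapse1 hrne] at h3
    calc I = μ Bs * ((μ Bs)⁻¹ * I) := by
          rw [← mul_assoc, ENNReal.mul_inv_cancel (hb0 Bs hBsmem) (hbt Bs hBsmem), one_mul]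
      _ ≤ μ Bs * σ ^ r := mul_le_mul' le_rfl h2
  have hσrt : σ ^ r ≠ ⊤ := ENNReal.rpow_ne_top_of_nonneg hr0.le hσtop
  have hIt : I ≠ ⊤ := ne_top_of_le_ne_top (ENNReal.mul_ne_top (hbt Bs hBsmem) hσrt) hIle
  set o := ENNReal.ofReal (1 - α) with ho
  have ho0 : o ≠ 0 := by
    simp only [ho, ne_eq, ENNReal.ofReal_eq_zero, not_le]; linarith
  have hot : o ≠ ⊤ := ENNReal.ofReal_ne_top
  set Lam := 𝓑.K * 𝓑.K * σ ^ r / o with hLamdef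
  have hLamt : Lam ≠ ⊤ := by
    rw [hLamdef]
    exact (ENNReal.div_lt_top (ENNReal.mul_ne_top (ENNReal.mul_ne_top hKt hKt) hσrt) ho0).ne
  set lam := Lam ^ (1/r) with hlamdef
  have hlamr : lam ^ r = Lam := OscAux.rpow_collapse1 hrne Lam
  have hlamt : lam ≠ ⊤ := ENNReal.rpow_ne_top_of_nonneg h1r.le hLamt
  -- the key pointwise inequality
  have key : ∀ x ∈ B, ∀ y ∈ B, ∀ A ∈ 𝓑.balls, x ∈ A →
      avgPow μ f A r ≤ (𝓑.K ^ (1/r) * σ + avgPow μ g A r) + Mmax μ 𝓑 f r y := by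
    intro x hx y hy A hA hxA
    have hA0 := hb0 A hA
    have hAt := hbt A hA
    by_cases hsmall : μ A ≤ 2 * μ B
    · have hABs : A ⊆ Bs := 𝓑.hull_sub B hB A hA hsmall ⟨x, hxA, hx⟩
      have t1 : avgPow μ f A r ≤
          ((μ A)⁻¹ * ∫⁻ z in A, (ENNReal.ofReal |f z - c|) ^ r ∂μ) ^ (1/r)
            + ENNReal.ofReal |c| :=
        OscAux2.avg_triangle hA0 hAt hfae.restrict hr c
      have t2 : ∫⁻ z in A, (ENNReal.ofReal |f z - c|) ^ r ∂μ
          = ∫⁻ z in A, (ENNReal.ofReal |g z|) ^ r ∂μ := by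
        refine setLIntegral_congr_fun (𝓑.meas A hA) (fun z hz => ?_)
        rw [hgdef, indicator_of_mem (hABs hz)]
      have t3 : ENNReal.ofReal |c| ≤
          ((μ Bs)⁻¹ * ∫⁻ z in Bs, (ENNReal.ofReal |f z|) ^ r ∂μ) ^ (1/r) := by
        rw [hc, intAvg]
        exact OscAux2.jensen_avg (hb0 Bs hBsmem) (hbt Bs hBsmem) hfae.restrict hr
      have t4 : ((μ Bs)⁻¹ * ∫⁻ z in Bs, (ENNReal.ofReal |f z|) ^ r ∂μ) ^ (1/r)
          ≤ Mmax μ 𝓑 f r y := by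
        have h5 := hMge y Bs hBsmem (hBBs hy)
        rwa [avgPow] at h5
      calc avgPow μ f A r
          ≤ avgPow μ g A r + ENNReal.ofReal |c| := by
            rw [t2] at t1
            exact t1
        _ ≤ avgPow μ g A r + Mmax μ 𝓑 f r y := add_le_add le_rfl (t3.trans t4)
        _ ≤ (𝓑.K ^ (1/r) * σ + avgPow μ g A r) + Mmax μ 𝓑 f r y := by
            exact add_le_add le_add_self le_rfl
    · push_neg at hsmall
      have hBA2 : μ B ≤ 2 * μ A := by
        calc μ B ≤ 2 * μ B := le_mul_of_one_le_left zero_le one_le_two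
          _ ≤ μ A := hsmall.le
          _ ≤ 2 * μ A := le_mul_of_one_le_left zero_le one_le_two
      have hAsmem : 𝓑.hull A ∈ 𝓑.balls := 𝓑.hull_mem A hA
      have hAAs : A ⊆ 𝓑.hull A := 𝓑.hull_sub A hA A hA
        (le_mul_of_one_le_left zero_le one_le_two) ⟨x, hxA, hxA⟩
      have hBAs : B ⊆ 𝓑.hull A := 𝓑.hull_sub A hA B hB hBA2 ⟨x, hx, hxA⟩
      have hKA : μ (𝓑.hull A) ≤ 𝓑.K * μ A := 𝓑.hull_bound A hA
      have t1 : avgPow μ f A r ≤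
          ((μ A)⁻¹ * ∫⁻ z in A,
              (ENNReal.ofReal |f z - intAvg μ f (𝓑.hull A)|) ^ r ∂μ) ^ (1/r)
            + ENNReal.ofReal |intAvg μ f (𝓑.hull A)| :=
        OscAux2.avg_triangle hA0 hAt hfae.restrict hr _
      have t2 : ((μ A)⁻¹ * ∫⁻ z in A,
              (ENNReal.ofReal |f z - intAvg μ f (𝓑.hull A)|) ^ r ∂μ) ^ (1/r)
          ≤ 𝓑.K ^ (1/r) * ((μ (𝓑.hull A))⁻¹ * ∫⁻ z in 𝓑.hull A,
              (ENNReal.ofReal |f z - intAvg μ f (𝓑.hull A)|) ^ r ∂μ) ^ (1/r) :=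
        OscAux2.avg_enlarge hAAs hKA hA0 hAt (hbt _ hAsmem) hr0 _
      have t3 : ((μ (𝓑.hull A))⁻¹ * ∫⁻ z in 𝓑.hull A,
          (ENNReal.ofReal |f z - intAvg μ f (𝓑.hull A)|) ^ r ∂μ) ^ (1/r) ≤ σ := by
        have h5 := hσB (𝓑.hull A) hAsmem hBAs
        rwa [sharpAvg] at h5
      have t4 : ENNReal.ofReal |intAvg μ f (𝓑.hull A)| ≤ Mmax μ 𝓑 f r y := by
        have h5 := hMge y (𝓑.hull A) hAsmem (hBAs hy)
        rw [avgPow] at h5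
        refine le_trans ?_ h5
        rw [intAvg]
        exact OscAux2.jensen_avg (hb0 _ hAsmem) (hbt _ hAsmem) hfae.restrict hr
      calc avgPow μ f A r
          ≤ 𝓑.K ^ (1/r) * σ + Mmax μ 𝓑 f r y :=
            t1.trans (add_le_add (t2.trans (mul_le_mul' le_rfl t3)) t4)
        _ ≤ (𝓑.K ^ (1/r) * σ + avgPow μ g A r) + Mmax μ 𝓑 f r y :=
            add_le_add (self_le_add_right _ _) le_rfl
  have keyM : ∀ x ∈ B, ∀ y ∈ B, ∀ lam' : ℝ≥0∞,
      (∀ A ∈ 𝓑.balls, x ∈ A → avgPow μ g A r ≤ lam') →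
      Mmax μ 𝓑 f r x - Mmax μ 𝓑 f r y ≤ 𝓑.K ^ (1/r) * σ + lam' := by
    intro x hx y hy lam' hlam'
    rw [tsub_le_iff_right]
    conv_lhs => rw [Mmax]
    refine iSup_le fun A => iSup_le fun hA => iSup_le fun hxA => ?_
    calc avgPow μ f A r
        ≤ (𝓑.K ^ (1/r) * σ + avgPow μ g A r) + Mmax μ 𝓑 f r y := key x hx y hy A hA hxA
      _ ≤ (𝓑.K ^ (1/r) * σ + lam') + Mmax μ 𝓑 f r y := by
          exact add_le_add (add_le_add le_rfl (hlam' A hA hxA)) le_rfl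
  -- final numeric comparison
  have hfinal : 𝓑.K ^ (1/r) * σ + lam ≤
      ENNReal.ofReal ((κ ^ (1/r) + (κ*κ) ^ (1/r) + 1) * (1 - α) ^ (-(1/r))) * σ := by
    have hle1 : (1:ℝ) ≤ (1 - α) ^ (-(1/r)) :=
      Real.one_le_rpow_of_pos_of_le_one_of_nonpos h1α (by linarith) (neg_nonpos.2 h1r.le)
    have hKr : 𝓑.K ^ (1/r) = ENNReal.ofReal (κ ^ (1/r)) := by
      rw [hKeq, ENNReal.ofReal_rpow_of_pos hκ0]
    have e1 : Lam = (𝓑.K * 𝓑.K * o⁻¹) * σ ^ r := by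
      rw [hLamdef, div_eq_mul_inv]; ring
    have e2 : lam = (𝓑.K * 𝓑.K * o⁻¹) ^ (1/r) * σ := by
      rw [hlamdef, e1, ENNReal.mul_rpow_of_nonneg _ _ h1r.le,
        OscAux.rpow_collapse2 hrne]
    have e3 : (𝓑.K * 𝓑.K * o⁻¹) ^ (1/r) = ENNReal.ofReal ((κ*κ/(1-α)) ^ (1/r)) := by
      rw [hKeq, ← ENNReal.ofReal_mul hκ0.le, ho, ← div_eq_mul_inv,
        ← ENNReal.ofReal_div_of_pos h1α, ENNReal.ofReal_rpow_of_pos (by positivity)]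
    have e4 : (κ*κ/(1-α)) ^ ((1:ℝ)/r) = (κ*κ) ^ (1/r) * (1-α) ^ (-(1/r)) := by
      rw [Real.div_rpow (by positivity) h1α.le, Real.rpow_neg h1α.le, div_eq_mul_inv]
    calc 𝓑.K ^ (1/r) * σ + lam
        = ENNReal.ofReal (κ ^ (1/r)) * σ
            + ENNReal.ofReal ((κ*κ) ^ (1/r) * (1-α) ^ (-(1/r))) * σ := by
          rw [hKr, e2, e3, e4]
      _ = ENNReal.ofReal (κ ^ (1/r) + (κ*κ) ^ (1/r) * (1-α) ^ (-(1/r))) * σ := by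
          rw [← add_mul, ← ENNReal.ofReal_add (Real.rpow_nonneg hκ0.le _)
            (mul_nonneg (Real.rpow_nonneg (by positivity) _) (by linarith))]
      _ ≤ ENNReal.ofReal ((κ ^ (1/r) + (κ*κ) ^ (1/r) + 1) * (1 - α) ^ (-(1/r))) * σ := by
          refine mul_le_mul' (ENNReal.ofReal_le_ofReal ?_) le_rfl
          have ha : (0:ℝ) ≤ κ ^ (1/r) := Real.rpow_nonneg hκ0.le _
          have hb : (0:ℝ) ≤ (κ*κ) ^ (1/r) := Real.rpow_nonneg (by positivity) _
          nlinarith [mul_nonneg ha (sub_nonneg.2 hle1)]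
  by_cases hI0 : I = 0
  · -- trivial branch : g vanishes a.e.
    have hMg0 : ∀ x ∈ B, ∀ A ∈ 𝓑.balls, x ∈ A → avgPow μ g A r ≤ 0 := by
      intro x hx A hA hxA
      have hz : ∫⁻ z in A, (ENNReal.ofReal |g z|) ^ r ∂μ = 0 := by
        refine le_antisymm ?_ zero_le
        rw [← hI0, hIdef]
        exact (lintegral_mono_set (subset_univ A)).trans_eq
          (by rw [Measure.restrict_univ])
      rw [avgPow, hz, mul_zero, ENNReal.zero_rpow_of_pos h1r]
    have hBB : ENNReal.ofReal α * μ B ≤ μ B := by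
      calc ENNReal.ofReal α * μ B ≤ 1 * μ B :=
            mul_le_mul' (ENNReal.ofReal_le_one.2 hα1.le) le_rfl
        _ = μ B := one_mul _
    refine le_trans (iInf_le_of_le B (iInf_le_of_le (𝓑.meas B hB)
      (iInf_le_of_le (Set.Subset.refl B) (iInf_le_of_le hBB le_rfl)))) ?_
    calc eosc (fun x => Mmax μ 𝓑 f r x) B
        ≤ 𝓑.K ^ (1/r) * σ + 0 := by
          rw [eosc]
          exact iSup_le fun x => iSup_le fun hx => iSup_le fun y => iSup_le fun hy =>
            keyM x hx y hy 0 (hMg0 x hx)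
      _ ≤ 𝓑.K ^ (1/r) * σ + lam := add_le_add le_rfl zero_le
      _ ≤ _ := hfinal
  · -- main branch
    have hlam0 : lam ≠ 0 := by
      intro hz
      apply hI0
      have hΛ0 : Lam = 0 := by
        rcases (ENNReal.rpow_eq_zero_iff).1 (hlamdef ▸ hz) with ⟨h1, _⟩ | ⟨h1, h2⟩
        · exact h1
        · exact absurd h2 (not_lt.2 h1r.le)
      have hσr0 : σ ^ r = 0 := by
        rw [hLamdef, ENNReal.div_eq_zero_iff] at hΛ0
        rcases hΛ0 with h1 | h1
        · rcases mul_eq_zero.1 h1 with h2 | h2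
          · exact absurd h2 (mul_ne_zero hK0 hK0)
          · exact h2
        · exact absurd h1 hot
      exact le_antisymm (by simpa [hσr0] using hIle) zero_le
    have hlamr0 : lam ^ r ≠ 0 := by
      intro hz
      rcases (ENNReal.rpow_eq_zero_iff).1 hz with ⟨h1, _⟩ | ⟨h1, h2⟩
      · exact hlam0 h1
      · exact absurd h2 (not_lt.2 hr0.le)
    have hlamrt : lam ^ r ≠ ⊤ := ENNReal.rpow_ne_top_of_nonneg hr0.le hlamt
    set F : Set (Set X) := {A | A ∈ 𝓑.balls ∧ lam < avgPow μ g A r} with hF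
    have hFball : ∀ A ∈ F, A ∈ 𝓑.balls := fun A hA => hA.1
    set ν := μ.withDensity (fun x => (ENNReal.ofReal |g x|) ^ r) with hνdef
    have hνapp : ∀ A : Set X, MeasurableSet A →
        ν A = ∫⁻ x in A, (ENNReal.ofReal |g x|) ^ r ∂μ := fun A hA =>
      withDensity_apply _ hA
    have hνuniv : ν univ = I := by
      rw [hνapp univ MeasurableSet.univ, Measure.restrict_univ, hIdef]
    have hFkey : ∀ A ∈ F, lam ^ r * μ A < ν A := by
      intro A hAF
      obtain ⟨hA, hlt⟩ := hAF
      have h1 : lam ^ r < (μ A)⁻¹ * ∫⁻ z in A, (ENNReal.ofReal |g z|) ^ r ∂μ := by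
        calc lam ^ r < (avgPow μ g A r) ^ r := ENNReal.rpow_lt_rpow hlt hr0
          _ = (μ A)⁻¹ * ∫⁻ z in A, (ENNReal.ofReal |g z|) ^ r ∂μ := by
              rw [avgPow]; exact OscAux.rpow_collapse1 hrne _
      rw [hνapp A (𝓑.meas A hA)]
      calc lam ^ r * μ A
          < ((μ A)⁻¹ * ∫⁻ z in A, (ENNReal.ofReal |g z|) ^ r ∂μ) * μ A :=
            by
                rw [mul_comm _ (μ A), mul_comm _ (μ A)]
                exact ENNReal.mul_lt_mul_right (hb0 A hA) (hbt A hA) h1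
        _ = ∫⁻ z in A, (ENNReal.ofReal |g z|) ^ r ∂μ := by
            rw [mul_comm ((μ A)⁻¹) _, mul_assoc,
              ENNReal.inv_mul_cancel (hb0 A hA) (hbt A hA), mul_one]
    have hνle : ∀ A : Set X, MeasurableSet A → ν A ≤ I := fun A hA =>
      le_of_le_of_eq (measure_mono (subset_univ _)) hνuniv
    have hμF : ∀ A ∈ F, μ A ≤ I / lam ^ r := by
      intro A hAF
      rw [ENNReal.le_div_iff_mul_le (Or.inl hlamr0) (Or.inl hlamrt)]
      calc μ A * lam ^ r = lam ^ r * μ A := mul_comm _ _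
        _ ≤ ν A := (hFkey A hAF).le
        _ ≤ I := hνle A (𝓑.meas A (hFball A hAF))
    have hRt : I / lam ^ r ≠ ⊤ := (ENNReal.div_lt_top hIt hlamr0).ne
    obtain ⟨u, huF, hdisj, hcov⟩ := Vitali.exists_disjoint_subfamily_covering_enlargement
      (id : Set X → Set X) F (fun A => (μ A).toReal) 2 one_lt_two
      (fun A _ => ENNReal.toReal_nonneg) ((I / lam ^ r).toReal)
      (fun A hA => ENNReal.toReal_mono hRt (hμF A hA))
      (fun A hA => nonempty_of_measure_ne_zero (hb0 A (hFball A hA)))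
    have huball : ∀ b ∈ u, b ∈ 𝓑.balls := fun b hb => hFball b (huF hb)
    have hcnt : u.Countable := by
      have hdisj' : Pairwise (Function.onFun Disjoint (fun b : ↥u => (b : Set X))) := by
        intro i j hij
        exact hdisj i.2 j.2 (fun hh => hij (Subtype.ext hh))
      have hmeas' : ∀ b : ↥u, MeasurableSet (b : Set X) :=
        fun b => 𝓑.meas b (huball b b.2)
      have hfin : ν (⋃ b : ↥u, (b : Set X)) ≠ ⊤ :=
        ne_top_of_le_ne_top hIt
          (le_of_le_of_eq (measure_mono (subset_univ _)) hνuniv)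
      have hcc := MeasureTheory.Measure.countable_meas_pos_of_disjoint_of_meas_iUnion_ne_top
        (μ := ν) hmeas' hdisj' hfin
      have hall : {i : ↥u | 0 < ν (i : Set X)} = univ := by
        ext i
        simp only [mem_setOf_eq, mem_univ, iff_true]
        exact lt_of_le_of_lt zero_le (hFkey i (huF i.2))
      rw [hall] at hcc
      exact countable_coe_iff.1 (countable_univ_iff.1 hcc)
    set U := ⋃ b ∈ u, 𝓑.hull b with hU
    have hUmeas : MeasurableSet U :=
      MeasurableSet.biUnion hcnt (fun b hb => 𝓑.meas _ (𝓑.hull_mem b (huball b hb)))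
    have hUle : μ U ≤ o * μ B := by
      haveI := hcnt.to_subtype
      have s1 : μ U ≤ ∑' b : ↥u, μ (𝓑.hull b) := measure_biUnion_le μ hcnt _
      have s2 : ∑' b : ↥u, μ (𝓑.hull (b : Set X)) ≤ ∑' b : ↥u, 𝓑.K * μ b :=
        ENNReal.tsum_le_tsum (fun b => 𝓑.hull_bound b (huball b b.2))
      have s4 : ∀ b : ↥u, μ (b : Set X) ≤ ν b * (lam ^ r)⁻¹ := by
        intro b
        rw [← div_eq_mul_inv, ENNReal.le_div_iff_mul_le (Or.inl hlamr0) (Or.inl hlamrt)]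
        calc μ (b : Set X) * lam ^ r = lam ^ r * μ b := mul_comm _ _
          _ ≤ ν b := (hFkey b (huF b.2)).le
      have s5 : ∑' b : ↥u, μ (b : Set X) ≤ (∑' b : ↥u, ν b) * (lam ^ r)⁻¹ := by
        rw [← ENNReal.tsum_mul_right]
        exact ENNReal.tsum_le_tsum s4
      have s6 : ∑' b : ↥u, ν (b : Set X) = ν (⋃ b ∈ u, (b : Set X)) :=
        (measure_biUnion hcnt hdisj (fun b hb => 𝓑.meas b (huball b hb))).symm
      have s7 : ν (⋃ b ∈ u, (b : Set X)) ≤ I :=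
        le_of_le_of_eq (measure_mono (subset_univ _)) hνuniv
      have s8 : ∑' b : ↥u, ν (b : Set X) ≤ I := s6 ▸ s7
      calc μ U ≤ ∑' b : ↥u, μ (𝓑.hull (b : Set X)) := s1
        _ ≤ ∑' b : ↥u, 𝓑.K * μ b := s2
        _ = 𝓑.K * ∑' b : ↥u, μ (b : Set X) := ENNReal.tsum_mul_left
        _ ≤ 𝓑.K * ((∑' b : ↥u, ν b) * (lam ^ r)⁻¹) := mul_le_mul' le_rfl s5
        _ ≤ 𝓑.K * (I * (lam ^ r)⁻¹) :=
            mul_le_mul' le_rfl (mul_le_mul' s8 le_rfl)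
        _ ≤ 𝓑.K * ((𝓑.K * μ B * σ ^ r) * (lam ^ r)⁻¹) := by
            refine mul_le_mul' le_rfl (mul_le_mul' (hIle.trans ?_) le_rfl)
            exact mul_le_mul' (𝓑.hull_bound B hB) le_rfl
        _ = (𝓑.K * 𝓑.K * σ ^ r) * (lam ^ r)⁻¹ * μ B := by ring
        _ ≤ o * μ B := by
            refine mul_le_mul' ?_ le_rfl
            rw [hlamr, hLamdef, ENNReal.inv_div (Or.inl hot) (Or.inl ho0)]
            exact ENNReal.mul_div_le
    set E := B \ U with hE
    have hEmeas : MeasurableSet E := (𝓑.meas B hB).diff hUmeas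
    have hEsub : E ⊆ B := diff_subset
    have hEμ : ENNReal.ofReal α * μ B ≤ μ E := by
      have hsum : ENNReal.ofReal α * μ B + o * μ B = μ B := by
        rw [ho, ← add_mul, ← ENNReal.ofReal_add hα0.le h1α.le]
        norm_num
      have hBle : μ B ≤ μ E + μ U :=
        le_trans (measure_mono (subset_diff_union B U)) (measure_union_le _ _)
      have hoBt : o * μ B ≠ ⊤ := ENNReal.mul_ne_top hot (hbt B hB)
      calc ENNReal.ofReal α * μ B = μ B - o * μ B :=
            ENNReal.eq_sub_of_add_eq hoBt hsum
        _ ≤ μ B - μ U := tsub_le_tsub_left hUle _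
        _ ≤ μ E := tsub_le_iff_right.2 hBle
    have hMgE : ∀ x ∈ E, ∀ A ∈ 𝓑.balls, x ∈ A → avgPow μ g A r ≤ lam := by
      intro x hx A hA hxA
      by_contra hgt
      push_neg at hgt
      have hAF : A ∈ F := ⟨hA, hgt⟩
      obtain ⟨b, hbu, hnon, hle⟩ := hcov A hAF
      have hμAb : μ A ≤ 2 * μ b := by
        have h2 : (μ A).toReal ≤ (2 * μ b).toReal := by
          rw [ENNReal.toReal_mul, ENNReal.toReal_ofNat]
          exact hle
        exact (ENNReal.toReal_le_toReal (hbt A hA)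
          (ENNReal.mul_ne_top (by simp) (hbt b (huball b hbu)))).1 h2
      have hAhull : A ⊆ 𝓑.hull b :=
        𝓑.hull_sub b (huball b hbu) A hA hμAb (by simpa using hnon)
      exact hx.2 (mem_biUnion hbu (hAhull hxA))
    refine le_trans (iInf_le_of_le E (iInf_le_of_le hEmeas
      (iInf_le_of_le hEsub (iInf_le_of_le hEμ le_rfl)))) ?_
    calc eosc (fun x => Mmax μ 𝓑 f r x) E
        ≤ 𝓑.K ^ (1/r) * σ + lam := by
          rw [eosc]
          exact iSup_le fun x => iSup_le fun hx => iSup_le fun y => iSup_le fun hy =>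
            keyM x (hEsub hx) y (hEsub hy) lam (hMgE x hx)
      _ ≤ _ := hfinal
end
end

section
/- Let B be a doubling ball-basis in a measure space (X, M, μ) and let T : L^r(X) → L^0(X) be a subadditive bounded oscillation (BO) operator with localization constant L(T) satisfying the weak-L^r inequality with norm ‖T‖_{L^r → L^{r,∞}}. Then for every f ∈ L^r(X), every ball B, and every 0 < α < 1, OSC_{B,α}(|Tf|) ≤ C (L(T) + (1−α)^{−1/r} ‖T‖_{L^r → L^{r,∞}}) · ⟨f⟩*_B, where ⟨f⟩*_B = sup_{A ⊇ B} (μ(A)⁻¹ ∫_A |f|^r)^{1/r} and C depends only on the ball-basis constants. -/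
open MeasureTheory ENNReal Set Filter

noncomputable section

variable {X : Type*} [MeasurableSpace X]

/-- oscillation bound for BO operators:
`OSC_{B,α}(|Tf|) ≤ C (L(T) + (1−α)^{−1/r} ‖T‖) ⟨f⟩*_B`. -/
theorem osc_BO_operator
    {X : Type*} [MeasurableSpace X] (μ : Measure X) (𝓑 : BallBasis X μ)
    (η : ℝ≥0∞) (hd : 𝓑.Doubling η) (r : ℝ) (hr : 1 ≤ r) :
    ∃ C : ℝ, 0 < C ∧
      ∀ (T : (X → ℝ) → (X → ℝ)) (L N : ℝ≥0∞),
        SubadditiveOp T → HasBOconst μ 𝓑 r T L → WeakType μ r T N →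
        ∀ f : X → ℝ, MemLp f (ENNReal.ofReal r) μ →
          ∀ B ∈ 𝓑.balls, ∀ α : ℝ, 0 < α → α < 1 →
            OSCa μ (fun x => |T f x|) B α ≤
              ENNReal.ofReal C * (L + ENNReal.ofReal ((1 - α) ^ (-(1 / r))) * N) *
                starAvg μ 𝓑 f B r := by
  have hKtop := 𝓑.K_lt_top
  have hr0 : (0:ℝ) < r := lt_of_lt_of_le one_pos hr
  have hrinv : (0:ℝ) < 1 / r := by positivity
  refine ⟨2 * (𝓑.K.toReal + 1), by positivity, ?_⟩
  intro T L N hsub hBO hWT f hf B hB α hα0 hα1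
  have h1α : (0:ℝ) < 1 - α := by linarith
  set H := 𝓑.hull B with hH
  have hHmem : H ∈ 𝓑.balls := 𝓑.hull_mem B hB
  have hHmeas : MeasurableSet H := 𝓑.meas H hHmem
  have hBmeas : MeasurableSet B := 𝓑.meas B hB
  have hBpos : 0 < μ B := 𝓑.pos B hB
  have hBlt : μ B < ∞ := 𝓑.lt_top B hB
  have hHpos : 0 < μ H := 𝓑.pos H hHmem
  have hHlt : μ H < ∞ := 𝓑.lt_top H hHmem
  have hBne : B.Nonempty := by
    rcases B.eq_empty_or_nonempty with h | h
    · rw [h] at hBpos; simp at hBpos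
    · exact h
  have hBsubH : B ⊆ H :=
    𝓑.hull_sub B hB B hB (le_mul_of_one_le_left' one_le_two) (by rwa [inter_self])
  set g₁ := H.indicator f with hg₁def
  set g₂ := Hᶜ.indicator f with hg₂def
  have hg12 : g₁ + g₂ = f := by
    funext z
    by_cases hz : z ∈ H <;>
      simp [hg₁def, hg₂def, Set.indicator_apply, hz]
  have hg₁mem : MemLp g₁ (ENNReal.ofReal r) μ := hf.indicator hHmeas
  set I := ∫⁻ x in H, (ENNReal.ofReal |f x|) ^ r ∂μ with hIdef
  have hIint : ∫⁻ x, (ENNReal.ofReal |g₁ x|) ^ r ∂μ = I := by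
    rw [hIdef, ← lintegral_indicator hHmeas]
    refine lintegral_congr fun x => ?_
    by_cases hx : x ∈ H
    · simp [hg₁def, Set.indicator_of_mem hx]
    · simp [hg₁def, Set.indicator_of_notMem hx, ENNReal.zero_rpow_of_pos hr0]
  set a := starAvg μ 𝓑 f B r with hadef
  have havgle : ((μ H)⁻¹ * I) ^ (1 / r) ≤ a := by
    have : avgPow μ f H r ≤ a := by
      rw [hadef, starAvg]
      exact le_iSup_of_le H (le_iSup_of_le hHmem (le_iSup_of_le hBsubH le_rfl))
    exact this
  have hIle : I ≤ μ H * a ^ r := by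
    have h2 : (μ H)⁻¹ * I ≤ a ^ r := by
      have h3 := ENNReal.rpow_le_rpow havgle (le_of_lt hr0)
      rwa [← ENNReal.rpow_mul, one_div, inv_mul_cancel₀ (ne_of_gt hr0),
        ENNReal.rpow_one] at h3
    calc I = μ H * ((μ H)⁻¹ * I) := by
            rw [← mul_assoc, ENNReal.mul_inv_cancel hHpos.ne' hHlt.ne, one_mul]
      _ ≤ μ H * a ^ r := mul_le_mul_right h2 _
  -- the key estimate
  have key : ∀ lam : ℝ, 0 < lam →
      μ {x | lam < |T g₁ x|} ≤ ENNReal.ofReal (1 - α) * μ B →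
      OSCa μ (fun x => |T f x|) B α ≤ L * a + ENNReal.ofReal (2 * lam) := by
    intro lam hlam hmeasS
    set S := {x | lam < |T g₁ x|} with hSdef
    set S' := toMeasurable μ S with hS'def
    set E := B \ S' with hEdef
    have hEmeas : MeasurableSet E := hBmeas.diff (measurableSet_toMeasurable μ S)
    have hEsub : E ⊆ B := Set.diff_subset
    have hfin : ENNReal.ofReal (1 - α) * μ B ≠ ∞ :=
      ENNReal.mul_ne_top ENNReal.ofReal_ne_top hBlt.ne
    have hEμ : ENNReal.ofReal α * μ B ≤ μ E := by
      have hS' : μ S' ≤ ENNReal.ofReal (1 - α) * μ B := by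
        rw [hS'def, measure_toMeasurable]; exact hmeasS
      have hsplit : μ B ≤ μ E + ENNReal.ofReal (1 - α) * μ B := by
        calc μ B ≤ μ (E ∪ S') := by
              refine measure_mono fun x hx => ?_
              by_cases h : x ∈ S'
              · exact Or.inr h
              · exact Or.inl ⟨hx, h⟩
          _ ≤ μ E + μ S' := measure_union_le _ _
          _ ≤ μ E + ENNReal.ofReal (1 - α) * μ B := add_le_add_right hS' _
      have hsum : ENNReal.ofReal α * μ B + ENNReal.ofReal (1 - α) * μ B = μ B := by
        rw [← add_mul, ← ENNReal.ofReal_add hα0.le h1α.le,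
          show α + (1 - α) = 1 by ring, ENNReal.ofReal_one, one_mul]
      exact (ENNReal.add_le_add_iff_right hfin).mp (le_trans (le_of_eq hsum) hsplit)
    have hosc2 : osc (T g₂) B ≤ L * a := hBO f hf B hB
    calc OSCa μ (fun x => |T f x|) B α ≤ osc (fun x => |T f x|) E := by
          rw [OSCa]
          exact iInf_le_of_le E (iInf_le_of_le hEmeas (iInf_le_of_le hEsub
            (iInf_le_of_le hEμ le_rfl)))
      _ ≤ L * a + ENNReal.ofReal (2 * lam) := by
          rw [osc]
          refine iSup₂_le fun x hx => iSup₂_le fun y hy => ?_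
          have hxB := hEsub hx
          have hyB := hEsub hy
          have hxS : |T g₁ x| ≤ lam := by
            by_contra h
            exact hx.2 (subset_toMeasurable μ S (by simpa [hSdef] using not_le.mp h))
          have hyS : |T g₁ y| ≤ lam := by
            by_contra h
            exact hy.2 (subset_toMeasurable μ S (by simpa [hSdef] using not_le.mp h))
          have hfx : |T f x| ≤ |T g₁ x| + |T g₂ x| := by
            have h := hsub.2 g₁ g₂ x; rwa [hg12] at h
          have hgy : |T g₂ y| ≤ |T f y| + |T g₁ y| := by
            have h1 := hsub.2 f ((-1 : ℝ) • g₁) y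
            have h2 : f + (-1 : ℝ) • g₁ = g₂ := by
              funext z
              by_cases hz : z ∈ H <;>
                simp [hg₁def, hg₂def, Set.indicator_apply, hz]
            have h3 := hsub.1 (-1) g₁ y
            rw [h2] at h1
            rw [h3] at h1
            simpa using h1
          have habs : |T g₂ x| - |T g₂ y| ≤ |T g₂ x - T g₂ y| :=
            abs_sub_abs_le_abs_sub _ _
          have hreal : |T f x| - |T f y| ≤ |T g₂ x - T g₂ y| + 2 * lam := by linarith
          have hoscxy : ENNReal.ofReal |T g₂ x - T g₂ y| ≤ osc (T g₂) B := by
            rw [osc]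
            rcases le_total (T g₂ y) (T g₂ x) with h | h
            · rw [abs_of_nonneg (by linarith)]
              exact le_iSup₂_of_le x hxB (le_iSup₂_of_le y hyB le_rfl)
            · rw [abs_of_nonpos (by linarith), neg_sub]
              exact le_iSup₂_of_le y hyB (le_iSup₂_of_le x hxB le_rfl)
          calc ENNReal.ofReal (|T f x| - |T f y|)
              ≤ ENNReal.ofReal (|T g₂ x - T g₂ y| + 2 * lam) :=
                ENNReal.ofReal_le_ofReal hreal
            _ = ENNReal.ofReal |T g₂ x - T g₂ y| + ENNReal.ofReal (2 * lam) :=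
                ENNReal.ofReal_add (abs_nonneg _) (by positivity)
            _ ≤ osc (T g₂) B + ENNReal.ofReal (2 * lam) := add_le_add_left hoscxy _
            _ ≤ L * a + ENNReal.ofReal (2 * lam) := add_le_add_left hosc2 _
  have hC1 : (1 : ℝ≥0∞) ≤ ENNReal.ofReal (2 * (𝓑.K.toReal + 1)) := by
    rw [ENNReal.one_le_ofReal]
    nlinarith [ENNReal.toReal_nonneg (a := 𝓑.K)]
  -- trivial case : N = 0 or I = 0
  by_cases htriv : N = 0 ∨ I = 0
  · have hzero : ∀ lam : ℝ, 0 < lam →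
        μ {x | lam < |T g₁ x|} ≤ ENNReal.ofReal (1 - α) * μ B := by
      intro lam hlam
      have h := hWT g₁ hg₁mem lam hlam
      rw [hIint] at h
      have hz : (N / ENNReal.ofReal lam) ^ r * I = 0 := by
        rcases htriv with h0 | h0
        · rw [h0, ENNReal.zero_div, ENNReal.zero_rpow_of_pos hr0, zero_mul]
        · rw [h0, mul_zero]
      rw [hz] at h
      exact h.trans zero_le
    have hLa : OSCa μ (fun x => |T f x|) B α ≤ L * a := by
      refine ENNReal.le_of_forall_pos_le_add fun ε hε _ => ?_
      have hεpos : (0:ℝ) < (ε : ℝ) := hε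
      have h := key ((ε : ℝ) / 2) (by positivity) (hzero _ (by positivity))
      calc OSCa μ (fun x => |T f x|) B α
          ≤ L * a + ENNReal.ofReal (2 * ((ε : ℝ) / 2)) := h
        _ = L * a + ε := by
            rw [show (2 : ℝ) * ((ε : ℝ) / 2) = (ε : ℝ) by ring,
              ENNReal.ofReal_coe_nnreal]
    calc OSCa μ (fun x => |T f x|) B α ≤ L * a := hLa
      _ ≤ (L + ENNReal.ofReal ((1 - α) ^ (-(1 / r))) * N) * a :=
          mul_le_mul_left le_self_add _
      _ ≤ ENNReal.ofReal (2 * (𝓑.K.toReal + 1)) *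
            (L + ENNReal.ofReal ((1 - α) ^ (-(1 / r))) * N) * a := by
          rw [mul_assoc]
          exact le_mul_of_one_le_left' hC1
  push_neg at htriv
  obtain ⟨hN0, hI0⟩ := htriv
  have hc0 : ENNReal.ofReal ((1 - α) ^ (-(1 / r))) ≠ 0 := by
    simp only [ne_eq, ENNReal.ofReal_eq_zero, not_le]
    positivity
  have hfac0 : ENNReal.ofReal (2 * (𝓑.K.toReal + 1)) *
      (L + ENNReal.ofReal ((1 - α) ^ (-(1 / r))) * N) ≠ 0 := by
    refine mul_ne_zero (by exact fun h => by simp [ENNReal.ofReal_eq_zero] at h; nlinarith [ENNReal.toReal_nonneg (a := 𝓑.K)]) ?_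
    intro h
    exact (mul_ne_zero hc0 hN0) (add_eq_zero.mp h).2
  -- case I = ∞
  by_cases hItop : I = ∞
  · have ha : a = ∞ := by
      have h1 := havgle
      rw [hItop, ENNReal.mul_top (ENNReal.inv_ne_zero.mpr hHlt.ne),
        ENNReal.top_rpow_of_pos hrinv] at h1
      exact top_le_iff.mp h1
    rw [ha, ENNReal.mul_top hfac0]
    exact le_top
  have hbase0 : ((μ H)⁻¹ * I) ≠ 0 :=
    mul_ne_zero (ENNReal.inv_ne_zero.mpr hHlt.ne) hI0
  have hbasetop : ((μ H)⁻¹ * I) ≠ ∞ :=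
    ENNReal.mul_ne_top (ENNReal.inv_ne_top.mpr hHpos.ne') hItop
  have ha0 : a ≠ 0 := by
    refine fun h => ?_
    have := havgle
    rw [h, le_zero_iff] at this
    exact (ENNReal.rpow_pos (lt_of_le_of_ne zero_le (Ne.symm hbase0)) hbasetop).ne'
      this
  -- case N = ∞
  by_cases hNtop : N = ∞
  · rw [hNtop, ENNReal.mul_top hc0, add_top,
      ENNReal.mul_top (by simp [ENNReal.ofReal_eq_zero]; nlinarith [ENNReal.toReal_nonneg (a := 𝓑.K)]),
      ENNReal.top_mul ha0]
    exact le_top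
  -- main case
  set A1 := ENNReal.ofReal (1 - α) with hA1def
  have hA10 : A1 ≠ 0 := by simp [hA1def, ENNReal.ofReal_eq_zero]; linarith
  have hA1top : A1 ≠ ∞ := ENNReal.ofReal_ne_top
  set D := I / (A1 * μ B) with hDdef
  have hD0 : D ≠ 0 := (ENNReal.div_pos hI0 (ENNReal.mul_ne_top hA1top hBlt.ne)).ne'
  have hDtop : D ≠ ∞ := (ENNReal.div_lt_top hItop (mul_ne_zero hA10 hBpos.ne')).ne
  set lam := N.toReal * D.toReal ^ (1 / r) with hlamdef
  have hlampos : 0 < lam :=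
    mul_pos (ENNReal.toReal_pos hN0 hNtop)
      (Real.rpow_pos_of_pos (ENNReal.toReal_pos hD0 hDtop) _)
  have hlamER : ENNReal.ofReal lam = N * D ^ (1 / r) := by
    rw [hlamdef, ENNReal.ofReal_mul ENNReal.toReal_nonneg,
      ENNReal.ofReal_toReal hNtop,
      ← ENNReal.ofReal_rpow_of_pos (ENNReal.toReal_pos hD0 hDtop),
      ENNReal.ofReal_toReal hDtop]
  have hx0 : D ^ (1 / r) ≠ 0 :=
    (ENNReal.rpow_pos (lt_of_le_of_ne zero_le (Ne.symm hD0)) hDtop).ne'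
  have hxtop : D ^ (1 / r) ≠ ∞ := ENNReal.rpow_ne_top_of_nonneg hrinv.le hDtop
  have hweak : μ {x | lam < |T g₁ x|} ≤ A1 * μ B := by
    have h := hWT g₁ hg₁mem lam hlampos
    rw [hIint, hlamER] at h
    refine h.trans_eq ?_
    have h1 : N / (N * D ^ (1 / r)) = (D ^ (1 / r))⁻¹ := by
      calc N / (N * D ^ (1 / r)) = N * 1 / (N * D ^ (1 / r)) := by rw [mul_one]
        _ = 1 / D ^ (1 / r) := ENNReal.mul_div_mul_left 1 _ hN0 hNtop
        _ = (D ^ (1 / r))⁻¹ := one_div _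
    rw [h1, ENNReal.inv_rpow, ← ENNReal.rpow_mul,
      one_div_mul_cancel (ne_of_gt hr0), ENNReal.rpow_one, hDdef,
      ENNReal.inv_div (Or.inr hItop) (Or.inr hI0),
      ENNReal.div_mul_cancel hI0 hItop]
  have hmain := key lam hlampos hweak
  -- bound D^(1/r)
  have hK1 : 𝓑.K ^ (1 / r) ≤ 𝓑.K + 1 := by
    rcases le_total 𝓑.K 1 with h | h
    · calc 𝓑.K ^ (1 / r) ≤ 1 ^ (1 / r) := ENNReal.rpow_le_rpow h hrinv.le
        _ = 1 := ENNReal.one_rpow _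
        _ ≤ 𝓑.K + 1 := le_add_self
    · calc 𝓑.K ^ (1 / r) ≤ 𝓑.K ^ (1 : ℝ) :=
            ENNReal.rpow_le_rpow_of_exponent_le h (by rw [div_le_one hr0]; exact hr)
        _ = 𝓑.K := ENNReal.rpow_one _
        _ ≤ 𝓑.K + 1 := self_le_add_right _ _
  have hDle : D ^ (1 / r) ≤ (𝓑.K + 1) * A1⁻¹ ^ (1 / r) * a := by
    have hIle2 : I ≤ 𝓑.K * μ B * a ^ r :=
      hIle.trans (mul_le_mul_left (𝓑.hull_bound B hB) _)
    have hD2 : D ≤ 𝓑.K * a ^ r / A1 := by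
      calc D ≤ 𝓑.K * μ B * a ^ r / (A1 * μ B) :=
            ENNReal.div_le_div_right hIle2 _
        _ = 𝓑.K * a ^ r * μ B / (A1 * μ B) := by ring_nf
        _ = 𝓑.K * a ^ r / A1 := ENNReal.mul_div_mul_right _ _ hBpos.ne' hBlt.ne
    calc D ^ (1 / r) ≤ (𝓑.K * a ^ r / A1) ^ (1 / r) :=
          ENNReal.rpow_le_rpow hD2 hrinv.le
      _ = (𝓑.K * a ^ r * A1⁻¹) ^ (1 / r) := by rw [div_eq_mul_inv]
      _ = 𝓑.K ^ (1 / r) * (a ^ r) ^ (1 / r) * A1⁻¹ ^ (1 / r) := by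
          rw [ENNReal.mul_rpow_of_nonneg _ _ hrinv.le,
            ENNReal.mul_rpow_of_nonneg _ _ hrinv.le]
      _ = 𝓑.K ^ (1 / r) * a * A1⁻¹ ^ (1 / r) := by
          rw [← ENNReal.rpow_mul, mul_one_div_cancel (ne_of_gt hr0), ENNReal.rpow_one]
      _ ≤ (𝓑.K + 1) * a * A1⁻¹ ^ (1 / r) :=
          mul_le_mul_left (mul_le_mul_left hK1 _) _
      _ = (𝓑.K + 1) * A1⁻¹ ^ (1 / r) * a := by ring
  have hc : ENNReal.ofReal ((1 - α) ^ (-(1 / r))) = A1⁻¹ ^ (1 / r) := by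
    rw [hA1def, ← ENNReal.ofReal_rpow_of_pos h1α, ENNReal.rpow_neg,
      ← ENNReal.inv_rpow]
  have hCeq : ENNReal.ofReal (2 * (𝓑.K.toReal + 1)) = 2 * (𝓑.K + 1) := by
    rw [ENNReal.ofReal_mul (by norm_num), ENNReal.ofReal_ofNat,
      ENNReal.ofReal_add ENNReal.toReal_nonneg zero_le_one,
      ENNReal.ofReal_toReal hKtop.ne, ENNReal.ofReal_one]
  have h2K : (1 : ℝ≥0∞) ≤ 2 * (𝓑.K + 1) := by
    calc (1 : ℝ≥0∞) ≤ 2 := one_le_two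
      _ = 2 * 1 := (mul_one _).symm
      _ ≤ 2 * (𝓑.K + 1) := mul_le_mul_right le_add_self _
  calc OSCa μ (fun x => |T f x|) B α
      ≤ L * a + ENNReal.ofReal (2 * lam) := hmain
    _ = L * a + 2 * (N * D ^ (1 / r)) := by
        rw [ENNReal.ofReal_mul (by norm_num : (0:ℝ) ≤ 2), hlamER,
          ENNReal.ofReal_ofNat]
    _ ≤ L * a + 2 * (N * ((𝓑.K + 1) * A1⁻¹ ^ (1 / r) * a)) :=
        add_le_add_right (mul_le_mul_right (mul_le_mul_right hDle N) 2) _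
    _ ≤ 2 * (𝓑.K + 1) * (L * a) + 2 * (N * ((𝓑.K + 1) * A1⁻¹ ^ (1 / r) * a)) :=
        add_le_add_left (le_mul_of_one_le_left' h2K) _
    _ = 2 * (𝓑.K + 1) * (L + A1⁻¹ ^ (1 / r) * N) * a := by ring
    _ = ENNReal.ofReal (2 * (𝓑.K.toReal + 1)) *
          (L + ENNReal.ofReal ((1 - α) ^ (-(1 / r))) * N) * a := by
        rw [hCeq, hc]
end
end
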